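/- arXiv:1609.08828 — 8 statements merged into one kernel-verified Lean document; each statement's English description precedes it below -/
import Mathlib

section
/- Let B be a real skew-symmetric 3×3 matrix, let V be a real vector space equipped with a symmetric bilinear form ⟨·,·⟩, and let v_1, v_2, v_3 ∈ V be a realization by reflections of B, i.e. (1) ⟨v_i,v_i⟩ = 2 for i = 1,2,3; (2) |⟨v_i,v_j⟩| = |b_ij| for i ≠ j; (3) if ⟨v_i,v_j⟩ ≠ 0 for all i ≠ j, then the number of pairs i < j with ⟨v_i,v_j⟩ > 0 is even if B is acyclic and odd if B is cyclic. Fix k ∈ {1,2,3} and define v'_j = v_j − ⟨v_j,v_k⟩v_k if b_jk > 0, v'_k = −v_k, and v'_j = v_j otherwise. Then the triple (v'_1, v'_2, v'_3) satisfies conditions (1)–(3) with respect to the mutated matrix B' = μ_k(B). -/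
open Matrix
noncomputable section

/-- Mutation of a real `3 × 3` matrix in direction `k`. -/
def mutate (k : Fin 3) (B : Matrix (Fin 3) (Fin 3) ℝ) : Matrix (Fin 3) (Fin 3) ℝ :=
  Matrix.of fun i j =>
    if i = k ∨ j = k then -B i j
    else B i j + (|B i k| * B k j + B i k * |B k j|) / 2

/-- One step of mutation equivalence: a single mutation, or a simultaneous
permutation of the index set. -/
def MutationStep (B B' : Matrix (Fin 3) (Fin 3) ℝ) : Prop :=
  (∃ k : Fin 3, B' = mutate k B) ∨
  (∃ σ : Equiv.Perm (Fin 3), B' = Matrix.of fun i j => B (σ i) (σ j))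

/-- Mutation equivalence: a finite sequence of mutations and simultaneous permutations. -/
def MutationEquiv : Matrix (Fin 3) (Fin 3) ℝ → Matrix (Fin 3) (Fin 3) ℝ → Prop :=
  Relation.ReflTransGen MutationStep

/-- `B` is cyclic if `b₁₂, b₂₃, b₃₁` are all nonzero and of the same sign. -/
def IsCyclicMat (B : Matrix (Fin 3) (Fin 3) ℝ) : Prop :=
  (0 < B 0 1 ∧ 0 < B 1 2 ∧ 0 < B 2 0) ∨ (B 0 1 < 0 ∧ B 1 2 < 0 ∧ B 2 0 < 0)

instance : DecidablePred IsCyclicMat := fun B => by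
  unfold IsCyclicMat; exact inferInstance

/-- `B` is mutation-cyclic if every matrix in its mutation class is cyclic. -/
def IsMutationCyclic (B : Matrix (Fin 3) (Fin 3) ℝ) : Prop :=
  ∀ B', MutationEquiv B B' → IsCyclicMat B'

/-- `B` is mutation-acyclic if some matrix in its mutation class is acyclic. -/
def IsMutationAcyclic (B : Matrix (Fin 3) (Fin 3) ℝ) : Prop :=
  ∃ B', MutationEquiv B B' ∧ ¬ IsCyclicMat B'

/-- The Markov constant `C(B)`. -/
def markov (B : Matrix (Fin 3) (Fin 3) ℝ) : ℝ :=
  (B 0 1) ^ 2 + (B 1 2) ^ 2 + (B 2 0) ^ 2 -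
    (if IsCyclicMat B then 1 else -1) * |B 0 1 * B 1 2 * B 2 0|

/-- The Lorentzian symmetric bilinear form on `ℝ^{2,1}`. -/
def lform (x y : Fin 3 → ℝ) : ℝ := x 0 * y 0 + x 1 * y 1 - x 2 * y 2

/-- A realization of `B` by reflections: a triple of vectors of square norm `2`
whose pairwise inner products have the absolute values `|b_ij|`, with the parity
condition on the number of positive inner products. -/
def ReflRealization {V : Type*} [AddCommGroup V] [Module ℝ V]
    (f : V →ₗ[ℝ] V →ₗ[ℝ] ℝ) (B : Matrix (Fin 3) (Fin 3) ℝ) (v : Fin 3 → V) : Prop :=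
  (∀ i, f (v i) (v i) = 2) ∧
  (∀ i j, i ≠ j → |f (v i) (v j)| = |B i j|) ∧
  ((∀ i j, i ≠ j → f (v i) (v j) ≠ 0) →
    (Finset.univ.filter
        (fun p : Fin 3 × Fin 3 => p.1 < p.2 ∧ 0 < f (v p.1) (v p.2))).card % 2
      = if IsCyclicMat B then 1 else 0)

/-- Mutation of a triple of vectors by partial reflections. -/
def mutateVecRefl {V : Type*} [AddCommGroup V] [Module ℝ V]
    (f : V →ₗ[ℝ] V →ₗ[ℝ] ℝ) (B : Matrix (Fin 3) (Fin 3) ℝ) (k : Fin 3) (v : Fin 3 → V) :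
    Fin 3 → V :=
  fun j =>
    if j = k then -v k
    else if 0 < B j k then v j - f (v j) (v k) • v k
    else v j

/-- A realization of `B` by `π`-rotations: a triple of vectors in `ℝ^{2,1}` of square
norm `-2` with pairwise inner products `-|b₁₂|, -|b₂₃|, -|b₃₁|`. -/
def RotRealization (B : Matrix (Fin 3) (Fin 3) ℝ) (v : Fin 3 → (Fin 3 → ℝ)) : Prop :=
  (∀ i, lform (v i) (v i) = -2) ∧
  lform (v 0) (v 1) = -|B 0 1| ∧ lform (v 1) (v 2) = -|B 1 2| ∧
  lform (v 2) (v 0) = -|B 2 0|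

/-- Mutation of a triple of points by partial `π`-rotations. -/
def mutateVecRot (B : Matrix (Fin 3) (Fin 3) ℝ) (k : Fin 3) (v : Fin 3 → (Fin 3 → ℝ)) :
    Fin 3 → (Fin 3 → ℝ) :=
  fun j => if 0 < B j k then -v j - lform (v j) (v k) • v k else v j


abbrev Cyc3 (a b c : ℝ) : Prop := (0 < a ∧ 0 < b ∧ 0 < c) ∨ (a < 0 ∧ b < 0 ∧ c < 0)

private lemma cyc3_rot (a b c : ℝ) : Cyc3 a b c ↔ Cyc3 b c a := by
  constructor
  · rintro (⟨h1,h2,h3⟩|⟨h1,h2,h3⟩)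
    · exact Or.inl ⟨h2,h3,h1⟩
    · exact Or.inr ⟨h2,h3,h1⟩
  · rintro (⟨h1,h2,h3⟩|⟨h1,h2,h3⟩)
    · exact Or.inl ⟨h3,h1,h2⟩
    · exact Or.inr ⟨h3,h1,h2⟩


private lemma count3 (g : Fin 3 → Fin 3 → ℝ) :
    (Finset.univ.filter (fun p : Fin 3 × Fin 3 => p.1 < p.2 ∧ 0 < g p.1 p.2)).card
    = (if 0 < g 0 1 then 1 else 0) + ((if 0 < g 0 2 then 1 else 0) + (if 0 < g 1 2 then 1 else 0)) := by
  rw [Finset.card_filter, Fintype.sum_prod_type,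
    Fin.sum_univ_three, Fin.sum_univ_three, Fin.sum_univ_three, Fin.sum_univ_three]
  norm_num [show (0:Fin 3)<2 from by decide, show (1:Fin 3)<2 from by decide,
    show ¬((2:Fin 3)=0) from by decide]
  ring


set_option maxHeartbeats 2000000 in
private lemma mixedCore (b01 b12 b20 x01 x02 x12 : ℝ)
    (hb01 : b01 < 0) (hb20 : b20 < 0) (hb12 : b12 ≠ 0)
    (h1 : x01 = b01 ∨ x01 = -b01) (h2 : x02 = b20 ∨ x02 = -b20) (h3 : x12 = b12 ∨ x12 = -b12)
    (hpar : (((if 0<x01 then 1 else 0)+((if 0<x02 then 1 else 0)+(if 0<x12 then 1 else 0))) : ℕ) % 2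
      = (if b12 < 0 then 1 else 0)) :
    |x12 - x01*x02| = |b12 + b01*b20| ∧
    (x12 - x01*x02 ≠ 0 →
      (((if 0<x01 then 1 else 0)+((if 0<(-x02) then 1 else 0)+(if 0<(x12 - x01*x02) then 1 else 0))) : ℕ) % 2
        = (if 0 < b12 + b01*b20 then 1 else 0)) := by
  have hq : 0 < b01 * b20 := mul_pos_of_neg_of_neg hb01 hb20
  rcases h1 with h|h <;> rcases h2 with h'|h' <;> rcases h3 with h''|h'' <;>
    subst h <;> subst h' <;> subst h'' <;>
    rcases hb12.lt_or_gt with hs|hs <;>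
    (try simp only [neg_neg] at hpar ⊢)
  all_goals constructor
  all_goals first
    | (rw [abs_eq_abs]; first | (left; ring1) | (right; ring1))
    | (exfalso; split_ifs at hpar <;> norm_num at hpar <;> linarith)
    | (intro hne
       split_ifs at hpar ⊢ <;>
         first
         | (norm_num; done)
         | linarith
         | (exfalso; norm_num at hpar; done)
         | (rcases hne.lt_or_gt with h|h <;> linarith)
         | nlinarith [hq])

set_option maxHeartbeats 2000000 in
private lemma mixedCoreB (b01 b12 b20 x01 x02 x12 : ℝ)
    (hb01 : 0 < b01) (hb20 : 0 < b20) (hb12 : b12 ≠ 0)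
    (h1 : x01 = b01 ∨ x01 = -b01) (h2 : x02 = b20 ∨ x02 = -b20) (h3 : x12 = b12 ∨ x12 = -b12)
    (hpar : (((if 0<x01 then 1 else 0)+((if 0<x02 then 1 else 0)+(if 0<x12 then 1 else 0))) : ℕ) % 2
      = (if 0 < b12 then 1 else 0)) :
    |x12 - x01*x02| = |b12 - b01*b20| ∧
    (x12 - x01*x02 ≠ 0 →
      (((if 0<(-x01) then 1 else 0)+((if 0<x02 then 1 else 0)+(if 0<(x12 - x01*x02) then 1 else 0))) : ℕ) % 2
        = (if b12 - b01*b20 < 0 then 1 else 0)) := by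
  have hq : 0 < b01 * b20 := mul_pos hb01 hb20
  rcases h1 with h|h <;> rcases h2 with h'|h' <;> rcases h3 with h''|h'' <;>
    subst h <;> subst h' <;> subst h'' <;>
    rcases hb12.lt_or_gt with hs|hs <;>
    (try simp only [neg_neg] at hpar ⊢)
  all_goals constructor
  all_goals first
    | trivial
    | (rw [abs_eq_abs]; first | (left; ring1) | (right; ring1))
    | (exfalso; split_ifs at hpar <;> norm_num at hpar <;> linarith)
    | (intro hne
       split_ifs at hpar ⊢ <;>
         first
         | (norm_num; done)
         | linarith
         | (exfalso; norm_num at hpar; done)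
         | (rcases hne.lt_or_gt with h|h <;> linarith))

private lemma oddCount (a b : ℝ) (ha : a ≠ 0) (hb : b ≠ 0) :
    (((if 0<a then 1 else 0)+((if 0<(-b) then 1 else 0)+(if 0<(-(a*b)) then 1 else 0))) : ℕ) % 2 = 1 := by
  rcases ha.lt_or_gt with p1|p1 <;> rcases hb.lt_or_gt with p2|p2 <;>
    split_ifs <;>
    (try norm_num) <;>
    (exfalso; first
      | linarith [mul_pos_of_neg_of_neg p1 p2]
      | linarith [mul_pos p1 p2]
      | linarith [mul_neg_of_neg_of_pos p1 p2]
      | linarith [mul_neg_of_pos_of_neg p1 p2])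

private lemma oddCount2 (a b : ℝ) (ha : a ≠ 0) (hb : b ≠ 0) :
    (((if 0<(-a) then 1 else 0)+((if 0<b then 1 else 0)+(if 0<(-(a*b)) then 1 else 0))) : ℕ) % 2 = 1 := by
  rcases ha.lt_or_gt with p1|p1 <;> rcases hb.lt_or_gt with p2|p2 <;>
    split_ifs <;>
    (try norm_num) <;>
    (exfalso; first
      | linarith [mul_pos_of_neg_of_neg p1 p2]
      | linarith [mul_pos p1 p2]
      | linarith [mul_neg_of_neg_of_pos p1 p2]
      | linarith [mul_neg_of_pos_of_neg p1 p2])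

private lemma flipFlip (a b c : ℝ) (ha : a ≠ 0) (hb : b ≠ 0)
    (h : (((if 0<a then 1 else 0)+((if 0<b then 1 else 0)+(if 0<c then 1 else 0))) : ℕ) % 2 = 0) :
    (((if 0<(-a) then 1 else 0)+((if 0<(-b) then 1 else 0)+(if 0<c then 1 else 0))) : ℕ) % 2 = 0 := by
  rcases ha.lt_or_gt with p1|p1 <;> rcases hb.lt_or_gt with p2|p2 <;>
    split_ifs at h ⊢ <;> first | omega | linarith

private lemma keyMut (b01 b12 b20 x01 x02 x12 y01 y02 y12 c12 : ℝ)
    (h01 : |x01| = |b01|) (h02 : |x02| = |b20|) (h12 : |x12| = |b12|)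
    (hpar : x01 ≠ 0 → x02 ≠ 0 → x12 ≠ 0 →
      (((if 0<x01 then 1 else 0)+((if 0<x02 then 1 else 0)+(if 0<x12 then 1 else 0))) : ℕ) % 2
        = (if Cyc3 b01 b12 b20 then 1 else 0))
    (hy01 : y01 = if 0 < -b01 then x01 else -x01)
    (hy02 : y02 = if 0 < b20 then x02 else -x02)
    (hy12 : y12 = if ((0 < -b01) ↔ (0 < b20)) then x12 else x12 - x01*x02)
    (hc12 : c12 = b12 + (|b01| * (-b20) + (-b01) * |b20|) / 2) :
    |y01| = |b01| ∧ |y02| = |b20| ∧ |y12| = |c12| ∧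
    (y01 ≠ 0 → y02 ≠ 0 → y12 ≠ 0 →
      (((if 0<y01 then 1 else 0)+((if 0<y02 then 1 else 0)+(if 0<y12 then 1 else 0))) : ℕ) % 2
        = (if Cyc3 (-b01) c12 (-b20) then 1 else 0)) := by
  have c1 : |y01| = |b01| := by rw [hy01]; split_ifs <;> simp [h01, abs_neg]
  have c2 : |y02| = |b20| := by rw [hy02]; split_ifs <;> simp [h02, abs_neg]
  refine ⟨c1, c2, ?_⟩
  by_cases hA : 0 < -b01 <;> by_cases hB : 0 < b20
  · -- both reflected: b01 < 0, b20 > 0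
    have e1 : y01 = x01 := by rw [hy01, if_pos hA]
    have e2 : y02 = x02 := by rw [hy02, if_pos hB]
    have e3 : y12 = x12 := by rw [hy12, if_pos (iff_of_true hA hB)]
    have ec : c12 = b12 := by
      rw [hc12, abs_of_neg (neg_pos.mp hA), abs_of_pos hB]; ring
    refine ⟨by rw [e3, ec, h12], ?_⟩
    intro n1 n2 n3
    rw [e1] at n1; rw [e2] at n2; rw [e3] at n3
    have hnc : ¬ Cyc3 b01 b12 b20 := by
      rintro (⟨h,_,_⟩|⟨_,_,h⟩) <;> linarith [neg_pos.mp hA]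
    have hnc' : ¬ Cyc3 (-b01) c12 (-b20) := by
      rintro (⟨_,_,h⟩|⟨h,_,_⟩) <;> linarith
    rw [if_neg hnc', e1, e2, e3]
    have := hpar n1 n2 n3
    rwa [if_neg hnc] at this
  · -- mixed A: b01 < 0, b20 ≤ 0
    have hb01' : b01 < 0 := neg_pos.mp hA
    have e1 : y01 = x01 := by rw [hy01, if_pos hA]
    have e2 : y02 = -x02 := by rw [hy02, if_neg hB]
    have e3 : y12 = x12 - x01*x02 := by
      rw [hy12, if_neg (by simp [hA, hB])]
    by_cases hz : b20 = 0
    · have hx02 : x02 = 0 := by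
        have := h02; rw [hz, abs_zero, abs_eq_zero] at this; exact this
      have ec : c12 = b12 := by rw [hc12, hz]; ring_nf
      refine ⟨?_, ?_⟩
      · rw [e3, hx02, ec]; simpa using h12
      · intro n1 n2 n3
        exact absurd (by rw [e2, hx02, neg_zero]) n2
    · have hb20' : b20 < 0 := lt_of_le_of_ne (not_lt.mp hB) hz
      have hx01 : x01 ≠ 0 := by
        intro h; rw [h, abs_zero] at h01
        have : b01 = 0 := abs_eq_zero.mp h01.symm
        linarith
      have hx02 : x02 ≠ 0 := by
        intro h; rw [h, abs_zero] at h02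
        have : b20 = 0 := abs_eq_zero.mp h02.symm
        linarith
      have ec : c12 = b12 + b01*b20 := by
        rw [hc12, abs_of_neg hb01', abs_of_neg hb20']; ring
      have hCc : Cyc3 (-b01) c12 (-b20) ↔ 0 < c12 := by
        constructor
        · rintro (⟨_,h,_⟩|⟨h,_,_⟩)
          · exact h
          · linarith
        · intro h; exact Or.inl ⟨by linarith, h, by linarith⟩
      by_cases h0 : x12 = 0
      · have hb12z : b12 = 0 := by
          rw [h0, abs_zero] at h12; exact (abs_eq_zero.mp h12.symm)
        have hcv : c12 = b01 * b20 := by rw [ec, hb12z]; ring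
        have hcp : 0 < c12 := by
          rw [hcv]; exact mul_pos_of_neg_of_neg hb01' hb20'
        refine ⟨?_, ?_⟩
        · rw [e3, h0, hcv, zero_sub, abs_neg, abs_mul, h01, h02, ← abs_mul]
        · intro n1 n2 n3
          rw [if_pos (hCc.mpr hcp), e1, e2, e3, h0, zero_sub]
          exact oddCount x01 x02 hx01 hx02
      · have hb12 : b12 ≠ 0 := by
          intro h; rw [h, abs_zero] at h12; exact h0 (abs_eq_zero.mp h12)
        have hCb : Cyc3 b01 b12 b20 ↔ b12 < 0 := by
          constructor
          · rintro (⟨h,_,_⟩|⟨_,h,_⟩)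
            · linarith
            · exact h
          · intro h; exact Or.inr ⟨hb01', h, hb20'⟩
        have hp := hpar hx01 hx02 h0
        rw [if_congr hCb rfl rfl] at hp
        obtain ⟨K3, K4⟩ := mixedCore b01 b12 b20 x01 x02 x12 hb01' hb20' hb12
          (abs_eq_abs.mp h01) (abs_eq_abs.mp h02) (abs_eq_abs.mp h12) hp
        refine ⟨by rw [e3, ec]; exact K3, ?_⟩
        intro n1 n2 n3
        rw [e3] at n3
        rw [if_congr hCc rfl rfl, ec, e1, e2, e3]
        exact K4 n3
  · -- mixed B: b01 ≥ 0, b20 > 0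
    have e1 : y01 = -x01 := by rw [hy01, if_neg hA]
    have e2 : y02 = x02 := by rw [hy02, if_pos hB]
    have e3 : y12 = x12 - x01*x02 := by
      rw [hy12, if_neg (by simp [hA, hB])]
    by_cases hz : b01 = 0
    · have hx01 : x01 = 0 := by
        have := h01; rw [hz, abs_zero, abs_eq_zero] at this; exact this
      have ec : c12 = b12 := by rw [hc12, hz]; ring_nf
      refine ⟨?_, ?_⟩
      · rw [e3, hx01, ec]; simpa using h12
      · intro n1 n2 n3
        exact absurd (by rw [e1, hx01, neg_zero]) n1
    · have hb01' : 0 < b01 := by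
        rcases (not_lt.mp (fun h => hA (neg_pos.mpr h) : ¬ b01 < 0)).lt_or_eq with h|h
        · exact h
        · exact absurd h.symm hz
      have hx01 : x01 ≠ 0 := by
        intro h; rw [h, abs_zero] at h01
        have : b01 = 0 := abs_eq_zero.mp h01.symm
        linarith
      have hx02 : x02 ≠ 0 := by
        intro h; rw [h, abs_zero] at h02
        have : b20 = 0 := abs_eq_zero.mp h02.symm
        linarith
      have ec : c12 = b12 - b01*b20 := by
        rw [hc12, abs_of_pos hb01', abs_of_pos hB]; ring
      have hCc : Cyc3 (-b01) c12 (-b20) ↔ c12 < 0 := by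
        constructor
        · rintro (⟨h,_,_⟩|⟨_,h,_⟩)
          · linarith
          · exact h
        · intro h; exact Or.inr ⟨by linarith, h, by linarith⟩
      by_cases h0 : x12 = 0
      · have hb12z : b12 = 0 := by
          rw [h0, abs_zero] at h12; exact (abs_eq_zero.mp h12.symm)
        have hcv : c12 = -(b01 * b20) := by rw [ec, hb12z]; ring
        have hcp : c12 < 0 := by
          rw [hcv, neg_lt, neg_zero]; exact mul_pos hb01' hB
        refine ⟨?_, ?_⟩
        · rw [e3, h0, hcv, zero_sub, abs_neg, abs_neg, abs_mul, h01, h02, ← abs_mul]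
        · intro n1 n2 n3
          rw [if_pos (hCc.mpr hcp), e1, e2, e3, h0, zero_sub]
          exact oddCount2 x01 x02 hx01 hx02
      · have hb12 : b12 ≠ 0 := by
          intro h; rw [h, abs_zero] at h12; exact h0 (abs_eq_zero.mp h12)
        have hCb : Cyc3 b01 b12 b20 ↔ 0 < b12 := by
          constructor
          · rintro (⟨_,h,_⟩|⟨h,_,_⟩)
            · exact h
            · linarith
          · intro h; exact Or.inl ⟨hb01', h, hB⟩
        have hp := hpar hx01 hx02 h0
        rw [if_congr hCb rfl rfl] at hp
        obtain ⟨K3, K4⟩ := mixedCoreB b01 b12 b20 x01 x02 x12 hb01' hB hb12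
          (abs_eq_abs.mp h01) (abs_eq_abs.mp h02) (abs_eq_abs.mp h12) hp
        refine ⟨by rw [e3, ec]; exact K3, ?_⟩
        intro n1 n2 n3
        rw [e3] at n3
        rw [if_congr hCc rfl rfl, ec, e1, e2, e3]
        exact K4 n3
  · -- neither: b01 ≥ 0, b20 ≤ 0
    have hb01n : 0 ≤ b01 := by
      by_contra h; exact hA (neg_pos.mpr (lt_of_not_ge h))
    have e1 : y01 = -x01 := by rw [hy01, if_neg hA]
    have e2 : y02 = -x02 := by rw [hy02, if_neg hB]
    have e3 : y12 = x12 := by rw [hy12, if_pos (iff_of_false hA hB)]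
    have ec : c12 = b12 := by
      rw [hc12, abs_of_nonneg hb01n, abs_of_nonpos (not_lt.mp hB)]; ring
    refine ⟨by rw [e3, ec, h12], ?_⟩
    intro n1 n2 n3
    rw [e1] at n1; rw [e2] at n2; rw [e3] at n3
    have hx01 : x01 ≠ 0 := fun h => n1 (by rw [h, neg_zero])
    have hx02 : x02 ≠ 0 := fun h => n2 (by rw [h, neg_zero])
    have hb01' : 0 < b01 := by
      rcases hb01n.lt_or_eq with h|h
      · exact h
      · exfalso; rw [← h, abs_zero, abs_eq_zero] at h01; exact hx01 h01
    have hb20' : b20 < 0 := by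
      rcases (not_lt.mp hB).lt_or_eq with h|h
      · exact h
      · exfalso; rw [h, abs_zero, abs_eq_zero] at h02; exact hx02 h02
    have hnc : ¬ Cyc3 b01 b12 b20 := by
      rintro (⟨_,_,h⟩|⟨h,_,_⟩) <;> linarith
    have hnc' : ¬ Cyc3 (-b01) c12 (-b20) := by
      rintro (⟨h,_,_⟩|⟨_,_,h⟩) <;> linarith
    have hp := hpar hx01 hx02 n3
    rw [if_neg hnc] at hp
    rw [if_neg hnc', e1, e2, e3]
    exact flipFlip x01 x02 x12 hx01 hx02 hp

set_option maxHeartbeats 1000000 in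
/-- Mutation of a realization by reflections is again a realization
by reflections of the mutated matrix. -/
theorem mutation_preserves_refl_realization
    {V : Type*} [AddCommGroup V] [Module ℝ V]
    (f : V →ₗ[ℝ] V →ₗ[ℝ] ℝ) (hf : ∀ x y, f x y = f y x)
    (B : Matrix (Fin 3) (Fin 3) ℝ) (hB : Bᵀ = -B)
    (v : Fin 3 → V) (hv : ReflRealization f B v) (k : Fin 3) :
    ReflRealization f (mutate k B) (mutateVecRefl f B k v) := by
  obtain ⟨h1, h2, h3⟩ := hv
  have hsk : ∀ i j : Fin 3, B j i = -B i j := by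
    intro i j
    have := congrFun (congrFun hB i) j
    simpa using this
  -- norms are always preserved
  have hnorm : ∀ (k : Fin 3) i,
      f (mutateVecRefl f B k v i) (mutateVecRefl f B k v i) = 2 := by
    intro k i
    unfold mutateVecRefl
    split_ifs with hik hpos
    · simp [h1]
    · simp only [map_sub, _root_.map_smul, LinearMap.sub_apply, LinearMap.smul_apply, smul_eq_mul]
      rw [h1 i, h1 k, hf (v k) (v i)]
      ring
    · exact h1 i
  -- the mutated matrix is skew
  have msk : ∀ (k i j : Fin 3), mutate k B j i = -(mutate k B i j) := by
    intro k i j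
    unfold mutate
    simp only [Matrix.of_apply]
    by_cases h : i = k ∨ j = k
    · rw [if_pos (Or.comm.mp h), if_pos h, hsk i j]
    · rw [if_neg (fun hc => h (Or.comm.mp hc)), if_neg h,
        hsk i j, hsk k j, hsk i k, abs_neg, abs_neg]
      ring
  fin_cases k
  · -- k = 0
    show ReflRealization f (mutate 0 B) (mutateVecRefl f B 0 v)
    set w := mutateVecRefl f B 0 v with hw
    have E01 : mutate 0 B 0 1 = -(B 0 1) := by simp [mutate]
    have E20 : mutate 0 B 2 0 = -(B 2 0) := by simp [mutate]
    have E10 : mutate 0 B 1 0 = B 0 1 := by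
      rw [show mutate 0 B 1 0 = -B 1 0 from by simp [mutate], hsk 0 1, neg_neg]
    have E02 : mutate 0 B 0 2 = B 2 0 := by
      rw [show mutate 0 B 0 2 = -B 0 2 from by simp [mutate], hsk 2 0, neg_neg]
    have E12 : mutate 0 B 1 2
        = B 1 2 + (|B 0 1| * (-(B 2 0)) + (-(B 0 1)) * |B 2 0|) / 2 := by
      rw [show mutate 0 B 1 2 = B 1 2 + (|B 1 0| * B 0 2 + B 1 0 * |B 0 2|)/2 from by
          simp [mutate],
        hsk 0 1, hsk 2 0, abs_neg, abs_neg]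
    have F01 : f (w 0) (w 1)
        = if 0 < -(B 0 1) then f (v 0) (v 1) else -(f (v 0) (v 1)) := by
      rw [← hsk 0 1]
      by_cases hc : 0 < B 1 0 <;>
        simp [hw, mutateVecRefl, hc, h1, hf (v 1) (v 0)] <;> ring
    have F02 : f (w 0) (w 2)
        = if 0 < B 2 0 then f (v 0) (v 2) else -(f (v 0) (v 2)) := by
      by_cases hc : 0 < B 2 0 <;>
        simp [hw, mutateVecRefl, hc, h1, hf (v 2) (v 0)] <;> ring
    have F12 : f (w 1) (w 2)
        = if ((0 < -(B 0 1)) ↔ (0 < B 2 0)) then f (v 1) (v 2)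
          else f (v 1) (v 2) - f (v 0) (v 1) * f (v 0) (v 2) := by
      rw [← hsk 0 1]
      by_cases hc1 : 0 < B 1 0 <;> by_cases hc2 : 0 < B 2 0 <;>
        simp [hw, mutateVecRefl, hc1, hc2, h1, hf (v 1) (v 0), hf (v 2) (v 0),
          sub_smul, smul_smul] <;> ring
    have h01 : |f (v 0) (v 1)| = |B 0 1| := h2 0 1 (by decide)
    have h02 : |f (v 0) (v 2)| = |B 2 0| := by
      rw [h2 0 2 (by decide), hsk 2 0, abs_neg]
    have h12 : |f (v 1) (v 2)| = |B 1 2| := h2 1 2 (by decide)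
    have hparS : f (v 0) (v 1) ≠ 0 → f (v 0) (v 2) ≠ 0 → f (v 1) (v 2) ≠ 0 →
        (((if 0 < f (v 0) (v 1) then 1 else 0)
          + ((if 0 < f (v 0) (v 2) then 1 else 0)
            + (if 0 < f (v 1) (v 2) then 1 else 0))) : ℕ) % 2
          = (if Cyc3 (B 0 1) (B 1 2) (B 2 0) then 1 else 0) := by
      intro n1 n2 n3
      have hall : ∀ i j, i ≠ j → f (v i) (v j) ≠ 0 := by
        intro i j hij
        fin_cases i <;> fin_cases j <;>
          first
          | exact absurd rfl hij
          | exact n1 | exact n2 | exact n3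
          | (rw [hf]; first | exact n1 | exact n2 | exact n3)
      have hcnt := h3 hall
      rw [count3 (fun i j => f (v i) (v j))] at hcnt
      have hic : IsCyclicMat B ↔ Cyc3 (B 0 1) (B 1 2) (B 2 0) := Iff.rfl
      rwa [if_congr hic rfl rfl] at hcnt
    obtain ⟨K1, K2, K3, K4⟩ :=
      keyMut (B 0 1) (B 1 2) (B 2 0) (f (v 0) (v 1)) (f (v 0) (v 2)) (f (v 1) (v 2))
        (f (w 0) (w 1)) (f (w 0) (w 2)) (f (w 1) (w 2)) (mutate 0 B 1 2)
        h01 h02 h12 hparS F01 F02 F12 E12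
    refine ⟨hnorm 0, ?_, ?_⟩
    · intro i j hij
      fin_cases i <;> fin_cases j <;>
        first
        | exact absurd rfl hij
        | (show |f (w 0) (w 1)| = |mutate 0 B 0 1|; rw [E01, abs_neg]; exact K1)
        | (show |f (w 1) (w 0)| = |mutate 0 B 1 0|; rw [hf, E10]; exact K1)
        | (show |f (w 0) (w 2)| = |mutate 0 B 0 2|; rw [E02]; exact K2)
        | (show |f (w 2) (w 0)| = |mutate 0 B 2 0|; rw [hf, E20, abs_neg]; exact K2)
        | (show |f (w 1) (w 2)| = |mutate 0 B 1 2|; exact K3)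
        | (show |f (w 2) (w 1)| = |mutate 0 B 2 1|; rw [hf, msk 0 1 2, abs_neg]; exact K3)
    · intro hnz
      have n1 : f (w 0) (w 1) ≠ 0 := hnz 0 1 (by decide)
      have n2 : f (w 0) (w 2) ≠ 0 := hnz 0 2 (by decide)
      have n3 : f (w 1) (w 2) ≠ 0 := hnz 1 2 (by decide)
      rw [count3 (fun i j => f (w i) (w j))]
      have hic : IsCyclicMat (mutate 0 B)
          ↔ Cyc3 (-(B 0 1)) (mutate 0 B 1 2) (-(B 2 0)) := by
        unfold IsCyclicMat
        rw [E01, E20]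
      rw [if_congr hic rfl rfl]
      exact K4 n1 n2 n3
  · -- k = 1
    show ReflRealization f (mutate 1 B) (mutateVecRefl f B 1 v)
    set w := mutateVecRefl f B 1 v with hw
    have E12 : mutate 1 B 1 2 = -(B 1 2) := by simp [mutate]
    have E01 : mutate 1 B 0 1 = -(B 0 1) := by simp [mutate]
    have E21 : mutate 1 B 2 1 = B 1 2 := by
      rw [show mutate 1 B 2 1 = -B 2 1 from by simp [mutate], hsk 1 2, neg_neg]
    have E10 : mutate 1 B 1 0 = B 0 1 := by
      rw [show mutate 1 B 1 0 = -B 1 0 from by simp [mutate], hsk 0 1, neg_neg]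
    have Ec : mutate 1 B 2 0
        = B 2 0 + (|B 1 2| * (-(B 0 1)) + (-(B 1 2)) * |B 0 1|) / 2 := by
      rw [show mutate 1 B 2 0 = B 2 0 + (|B 2 1| * B 1 0 + B 2 1 * |B 1 0|)/2 from by
          simp [mutate],
        hsk 1 2, hsk 0 1, abs_neg, abs_neg]
    have F01 : f (w 1) (w 2)
        = if 0 < -(B 1 2) then f (v 1) (v 2) else -(f (v 1) (v 2)) := by
      rw [← hsk 1 2]
      by_cases hc : 0 < B 2 1 <;>
        simp [hw, mutateVecRefl, hc, h1, hf (v 2) (v 1)] <;> ring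
    have F02 : f (w 1) (w 0)
        = if 0 < B 0 1 then f (v 1) (v 0) else -(f (v 1) (v 0)) := by
      by_cases hc : 0 < B 0 1 <;>
        simp [hw, mutateVecRefl, hc, h1, hf (v 0) (v 1)] <;> ring
    have F12 : f (w 2) (w 0)
        = if ((0 < -(B 1 2)) ↔ (0 < B 0 1)) then f (v 2) (v 0)
          else f (v 2) (v 0) - f (v 1) (v 2) * f (v 1) (v 0) := by
      rw [← hsk 1 2]
      by_cases hc1 : 0 < B 2 1 <;> by_cases hc2 : 0 < B 0 1 <;>
        simp [hw, mutateVecRefl, hc1, hc2, h1, hf (v 2) (v 1), hf (v 0) (v 1),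
          sub_smul, smul_smul] <;> ring
    have h01 : |f (v 1) (v 2)| = |B 1 2| := h2 1 2 (by decide)
    have h02 : |f (v 1) (v 0)| = |B 0 1| := by
      rw [h2 1 0 (by decide), hsk 0 1, abs_neg]
    have h12 : |f (v 2) (v 0)| = |B 2 0| := h2 2 0 (by decide)
    have hparS : f (v 1) (v 2) ≠ 0 → f (v 1) (v 0) ≠ 0 → f (v 2) (v 0) ≠ 0 →
        (((if 0 < f (v 1) (v 2) then 1 else 0)
          + ((if 0 < f (v 1) (v 0) then 1 else 0)
            + (if 0 < f (v 2) (v 0) then 1 else 0))) : ℕ) % 2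
          = (if Cyc3 (B 1 2) (B 2 0) (B 0 1) then 1 else 0) := by
      intro n1 n2 n3
      have hall : ∀ i j, i ≠ j → f (v i) (v j) ≠ 0 := by
        intro i j hij
        fin_cases i <;> fin_cases j <;>
          first
          | exact absurd rfl hij
          | exact n1 | exact n2 | exact n3
          | (rw [hf]; first | exact n1 | exact n2 | exact n3)
      have hcnt := h3 hall
      rw [count3 (fun i j => f (v i) (v j))] at hcnt
      have hrot : Cyc3 (B 1 2) (B 2 0) (B 0 1) ↔ IsCyclicMat B :=
        (cyc3_rot _ _ _).trans (cyc3_rot _ _ _)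
      rw [if_congr hrot rfl rfl, hf (v 1) (v 0), hf (v 2) (v 0)]
      omega
    obtain ⟨K1, K2, K3, K4⟩ :=
      keyMut (B 1 2) (B 2 0) (B 0 1) (f (v 1) (v 2)) (f (v 1) (v 0)) (f (v 2) (v 0))
        (f (w 1) (w 2)) (f (w 1) (w 0)) (f (w 2) (w 0)) (mutate 1 B 2 0)
        h01 h02 h12 hparS F01 F02 F12 Ec
    refine ⟨hnorm 1, ?_, ?_⟩
    · intro i j hij
      fin_cases i <;> fin_cases j <;>
        first
        | exact absurd rfl hij
        | (show |f (w 1) (w 2)| = |mutate 1 B 1 2|; rw [E12, abs_neg]; exact K1)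
        | (show |f (w 2) (w 1)| = |mutate 1 B 2 1|; rw [hf, E21]; exact K1)
        | (show |f (w 1) (w 0)| = |mutate 1 B 1 0|; rw [E10]; exact K2)
        | (show |f (w 0) (w 1)| = |mutate 1 B 0 1|; rw [hf, E01, abs_neg]; exact K2)
        | (show |f (w 2) (w 0)| = |mutate 1 B 2 0|; exact K3)
        | (show |f (w 0) (w 2)| = |mutate 1 B 0 2|; rw [hf, msk 1 2 0, abs_neg]; exact K3)
    · intro hnz
      have n1 : f (w 1) (w 2) ≠ 0 := hnz 1 2 (by decide)
      have n2 : f (w 1) (w 0) ≠ 0 := hnz 1 0 (by decide)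
      have n3 : f (w 2) (w 0) ≠ 0 := hnz 2 0 (by decide)
      rw [count3 (fun i j => f (w i) (w j))]
      have hic : IsCyclicMat (mutate 1 B)
          ↔ Cyc3 (-(B 1 2)) (mutate 1 B 2 0) (-(B 0 1)) := by
        unfold IsCyclicMat
        rw [E01, E12]
        exact cyc3_rot _ _ _
      rw [if_congr hic rfl rfl]
      have K := K4 n1 n2 n3
      rw [hf (w 1) (w 0), hf (w 2) (w 0)] at K
      omega
  · -- k = 2
    show ReflRealization f (mutate 2 B) (mutateVecRefl f B 2 v)
    set w := mutateVecRefl f B 2 v with hw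
    have E20 : mutate 2 B 2 0 = -(B 2 0) := by simp [mutate]
    have E12 : mutate 2 B 1 2 = -(B 1 2) := by simp [mutate]
    have E02 : mutate 2 B 0 2 = B 2 0 := by
      rw [show mutate 2 B 0 2 = -B 0 2 from by simp [mutate], hsk 2 0, neg_neg]
    have E21 : mutate 2 B 2 1 = B 1 2 := by
      rw [show mutate 2 B 2 1 = -B 2 1 from by simp [mutate], hsk 1 2, neg_neg]
    have Ec : mutate 2 B 0 1
        = B 0 1 + (|B 2 0| * (-(B 1 2)) + (-(B 2 0)) * |B 1 2|) / 2 := by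
      rw [show mutate 2 B 0 1 = B 0 1 + (|B 0 2| * B 2 1 + B 0 2 * |B 2 1|)/2 from by
          simp [mutate],
        hsk 2 0, hsk 1 2, abs_neg, abs_neg]
    have F01 : f (w 2) (w 0)
        = if 0 < -(B 2 0) then f (v 2) (v 0) else -(f (v 2) (v 0)) := by
      rw [← hsk 2 0]
      by_cases hc : 0 < B 0 2 <;>
        simp [hw, mutateVecRefl, hc, h1, hf (v 0) (v 2)] <;> ring
    have F02 : f (w 2) (w 1)
        = if 0 < B 1 2 then f (v 2) (v 1) else -(f (v 2) (v 1)) := by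
      by_cases hc : 0 < B 1 2 <;>
        simp [hw, mutateVecRefl, hc, h1, hf (v 1) (v 2)] <;> ring
    have F12 : f (w 0) (w 1)
        = if ((0 < -(B 2 0)) ↔ (0 < B 1 2)) then f (v 0) (v 1)
          else f (v 0) (v 1) - f (v 2) (v 0) * f (v 2) (v 1) := by
      rw [← hsk 2 0]
      by_cases hc1 : 0 < B 0 2 <;> by_cases hc2 : 0 < B 1 2 <;>
        simp [hw, mutateVecRefl, hc1, hc2, h1, hf (v 0) (v 2), hf (v 1) (v 2),
          sub_smul, smul_smul] <;> ring
    have h01 : |f (v 2) (v 0)| = |B 2 0| := h2 2 0 (by decide)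
    have h02 : |f (v 2) (v 1)| = |B 1 2| := by
      rw [h2 2 1 (by decide), hsk 1 2, abs_neg]
    have h12 : |f (v 0) (v 1)| = |B 0 1| := h2 0 1 (by decide)
    have hparS : f (v 2) (v 0) ≠ 0 → f (v 2) (v 1) ≠ 0 → f (v 0) (v 1) ≠ 0 →
        (((if 0 < f (v 2) (v 0) then 1 else 0)
          + ((if 0 < f (v 2) (v 1) then 1 else 0)
            + (if 0 < f (v 0) (v 1) then 1 else 0))) : ℕ) % 2
          = (if Cyc3 (B 2 0) (B 0 1) (B 1 2) then 1 else 0) := by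
      intro n1 n2 n3
      have hall : ∀ i j, i ≠ j → f (v i) (v j) ≠ 0 := by
        intro i j hij
        fin_cases i <;> fin_cases j <;>
          first
          | exact absurd rfl hij
          | exact n1 | exact n2 | exact n3
          | (rw [hf]; first | exact n1 | exact n2 | exact n3)
      have hcnt := h3 hall
      rw [count3 (fun i j => f (v i) (v j))] at hcnt
      have hrot : Cyc3 (B 2 0) (B 0 1) (B 1 2) ↔ IsCyclicMat B :=
        cyc3_rot _ _ _
      rw [if_congr hrot rfl rfl, hf (v 2) (v 0), hf (v 2) (v 1)]
      omega
    obtain ⟨K1, K2, K3, K4⟩ :=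
      keyMut (B 2 0) (B 0 1) (B 1 2) (f (v 2) (v 0)) (f (v 2) (v 1)) (f (v 0) (v 1))
        (f (w 2) (w 0)) (f (w 2) (w 1)) (f (w 0) (w 1)) (mutate 2 B 0 1)
        h01 h02 h12 hparS F01 F02 F12 Ec
    refine ⟨hnorm 2, ?_, ?_⟩
    · intro i j hij
      fin_cases i <;> fin_cases j <;>
        first
        | exact absurd rfl hij
        | (show |f (w 2) (w 0)| = |mutate 2 B 2 0|; rw [E20, abs_neg]; exact K1)
        | (show |f (w 0) (w 2)| = |mutate 2 B 0 2|; rw [hf, E02]; exact K1)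
        | (show |f (w 2) (w 1)| = |mutate 2 B 2 1|; rw [E21]; exact K2)
        | (show |f (w 1) (w 2)| = |mutate 2 B 1 2|; rw [hf, E12, abs_neg]; exact K2)
        | (show |f (w 0) (w 1)| = |mutate 2 B 0 1|; exact K3)
        | (show |f (w 1) (w 0)| = |mutate 2 B 1 0|; rw [hf, msk 2 0 1, abs_neg]; exact K3)
    · intro hnz
      have n1 : f (w 2) (w 0) ≠ 0 := hnz 2 0 (by decide)
      have n2 : f (w 2) (w 1) ≠ 0 := hnz 2 1 (by decide)
      have n3 : f (w 0) (w 1) ≠ 0 := hnz 0 1 (by decide)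
      rw [count3 (fun i j => f (w i) (w j))]
      have hic : IsCyclicMat (mutate 2 B)
          ↔ Cyc3 (-(B 2 0)) (mutate 2 B 0 1) (-(B 1 2)) := by
        unfold IsCyclicMat
        rw [E20, E12]
        exact (cyc3_rot _ _ _).symm
      rw [if_congr hic rfl rfl]
      have K := K4 n1 n2 n3
      rw [hf (w 2) (w 0), hf (w 2) (w 1)] at K
      omega
end
end

section
/- Let ℝ^{2,1} denote ℝ³ with the Lorentzian symmetric bilinear form ⟨x,y⟩ = x_1y_1 + x_2y_2 − x_3y_3. Let B be a real skew-symmetric 3×3 matrix which is cyclic with b_12, b_23, b_31 > 0 and b_12, b_23, b_31 ≥ 2, and let v_1, v_2, v_3 ∈ ℝ^{2,1} satisfy (1) ⟨v_i,v_i⟩ = −2 for i = 1,2,3 and (2) ⟨v_i,v_j⟩ = −|b_ij| for 1 ≤ i < j ≤ 3. Fix k ∈ {1,2,3} and define v'_j = −v_j − ⟨v_j,v_k⟩v_k if b_jk > 0 and v'_j = v_j otherwise. Then B' = μ_k(B) is again cyclic with |b'_12|, |b'_23|, |b'_31| ≥ 2, and the triple (v'_1, v'_2, v'_3) satisfies conditions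 (1)–(2) with respect to B'. -/
open Matrix
noncomputable section

lemma lform_comm (x y : Fin 3 → ℝ) : lform x y = lform y x := by
  unfold lform; ring

lemma lform_sq (x y : Fin 3 → ℝ) (s : ℝ) :
    lform (-x - s • y) (-x - s • y)
      = lform x x + 2 * s * lform x y + s ^ 2 * lform y y := by
  simp only [lform, Pi.sub_apply, Pi.neg_apply, Pi.smul_apply, smul_eq_mul]
  ring

lemma lform_sub_left (x y z : Fin 3 → ℝ) (s : ℝ) :
    lform (-x - s • y) z = -lform x z - s * lform y z := by
  simp only [lform, Pi.sub_apply, Pi.neg_apply, Pi.smul_apply, smul_eq_mul]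
  ring

lemma lform_sub_right (z x y : Fin 3 → ℝ) (s : ℝ) :
    lform z (-x - s • y) = -lform z x - s * lform z y := by
  simp only [lform, Pi.sub_apply, Pi.neg_apply, Pi.smul_apply, smul_eq_mul]
  ring

lemma markov_key (a b c : ℝ) (ha : 2 ≤ a) (hb : 2 ≤ b) (hc : 2 ≤ c)
    (hm : a^2 + b^2 + c^2 ≤ a*b*c + 4) : 2 ≤ a*b - c := by
  nlinarith [sq_nonneg (a-b), sq_nonneg (c-2),
    mul_nonneg (sub_nonneg.2 ha) (sub_nonneg.2 hb), sq_nonneg (a+b-c)]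

lemma gram_ineq (v : Fin 3 → Fin 3 → ℝ) (a b c : ℝ)
    (h00 : lform (v 0) (v 0) = -2) (h11 : lform (v 1) (v 1) = -2)
    (h22 : lform (v 2) (v 2) = -2)
    (h01 : lform (v 0) (v 1) = -a) (h12 : lform (v 1) (v 2) = -b)
    (h02 : lform (v 0) (v 2) = -c) :
    a^2 + b^2 + c^2 ≤ a*b*c + 4 := by
  set M : Matrix (Fin 3) (Fin 3) ℝ := Matrix.of fun i j => v i j with hM
  set J : Matrix (Fin 3) (Fin 3) ℝ := Matrix.diagonal ![1,1,-1] with hJ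
  have hG : (M * J * Mᵀ) = Matrix.of fun i j => lform (v i) (v j) := by
    ext i j
    simp [hM, hJ, Matrix.mul_apply, Fin.sum_univ_three, Matrix.diagonal, lform]
    ring
  have hdet : (M * J * Mᵀ).det = -(M.det)^2 := by
    rw [Matrix.det_mul, Matrix.det_mul, Matrix.det_transpose, hJ,
      Matrix.det_diagonal]
    simp [Fin.prod_univ_three]
    ring
  have hle : (M * J * Mᵀ).det ≤ 0 := by
    rw [hdet]; exact neg_nonpos.mpr (sq_nonneg _)
  rw [hG, Matrix.det_fin_three] at hle
  simp only [Matrix.of_apply] at hle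
  have hsym : ∀ x y, lform x y = lform y x := by intro x y; unfold lform; ring
  rw [h00, h11, h22, h01, h12, h02, hsym (v 1) (v 0), hsym (v 2) (v 0),
    hsym (v 2) (v 1), h01, h12, h02] at hle
  nlinarith [hle]

/-- Mutation of a realization by π-rotations of a cyclic matrix with
all weights at least 2 is again such a realization of the mutated matrix. -/
theorem mutation_preserves_rot_realization
    (B : Matrix (Fin 3) (Fin 3) ℝ) (hB : Bᵀ = -B)
    (hpos : 0 < B 0 1 ∧ 0 < B 1 2 ∧ 0 < B 2 0)
    (h2 : 2 ≤ B 0 1 ∧ 2 ≤ B 1 2 ∧ 2 ≤ B 2 0)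
    (v : Fin 3 → (Fin 3 → ℝ))
    (hv1 : ∀ i, lform (v i) (v i) = -2)
    (hv2 : ∀ i j : Fin 3, i < j → lform (v i) (v j) = -|B i j|)
    (k : Fin 3) :
    (IsCyclicMat (mutate k B) ∧
      2 ≤ |mutate k B 0 1| ∧ 2 ≤ |mutate k B 1 2| ∧ 2 ≤ |mutate k B 2 0|) ∧
    (∀ i, lform (mutateVecRot B k v i) (mutateVecRot B k v i) = -2) ∧
    (∀ i j : Fin 3, i < j →
      lform (mutateVecRot B k v i) (mutateVecRot B k v j) = -|mutate k B i j|) := by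
  obtain ⟨hp01, hp12, hp20⟩ := hpos
  obtain ⟨h2a, h2b, h2c⟩ := h2
  have hskew : ∀ i j, B i j = -(B j i) := by
    intro i j
    have := congrFun (congrFun hB j) i
    simpa [Matrix.transpose_apply] using this
  have n10 : B 1 0 = -(B 0 1) := hskew 1 0
  have n21 : B 2 1 = -(B 1 2) := hskew 2 1
  have n02 : B 0 2 = -(B 2 0) := hskew 0 2
  have hd : ∀ i, B i i = 0 := fun i => by have := hskew i i; linarith
  have h01 : lform (v 0) (v 1) = -(B 0 1) := by
    rw [hv2 0 1 (by decide), abs_of_pos hp01]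
  have h12 : lform (v 1) (v 2) = -(B 1 2) := by
    rw [hv2 1 2 (by decide), abs_of_pos hp12]
  have h02 : lform (v 0) (v 2) = -(B 2 0) := by
    rw [hv2 0 2 (by decide), n02, abs_neg, abs_of_pos hp20]
  have h10 : lform (v 1) (v 0) = -(B 0 1) := by rw [lform_comm]; exact h01
  have h21 : lform (v 2) (v 1) = -(B 1 2) := by rw [lform_comm]; exact h12
  have h20 : lform (v 2) (v 0) = -(B 2 0) := by rw [lform_comm]; exact h02
  have hmar := gram_ineq v (B 0 1) (B 1 2) (B 2 0) (hv1 0) (hv1 1) (hv1 2) h01 h12 h02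
  have kab : 2 ≤ B 0 1 * B 1 2 - B 2 0 := markov_key _ _ _ h2a h2b h2c hmar
  have kbc : 2 ≤ B 1 2 * B 2 0 - B 0 1 :=
    markov_key _ _ _ h2b h2c h2a (by nlinarith [hmar])
  have kca : 2 ≤ B 2 0 * B 0 1 - B 1 2 :=
    markov_key _ _ _ h2c h2a h2b (by nlinarith [hmar])
  have hnorm : ∀ i, lform (mutateVecRot B k v i) (mutateVecRot B k v i) = -2 := by
    intro i
    simp only [mutateVecRot]
    split
    · rw [lform_sq, hv1 i, hv1 k]; ring
    · exact hv1 i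
  refine ⟨?_, hnorm, ?_⟩ <;> fin_cases k
  · -- cyclic part, k = 0
    show IsCyclicMat (mutate 0 B) ∧
      2 ≤ |mutate 0 B 0 1| ∧ 2 ≤ |mutate 0 B 1 2| ∧ 2 ≤ |mutate 0 B 2 0|
    have m01 : mutate 0 B 0 1 = -(B 0 1) := by
      simp only [mutate, Matrix.of_apply]; rw [if_pos (by decide)]
    have m12 : mutate 0 B 1 2 = B 1 2 - B 2 0 * B 0 1 := by
      simp only [mutate, Matrix.of_apply]; rw [if_neg (by decide)]
      rw [n10, n02, abs_neg, abs_neg, abs_of_pos hp01, abs_of_pos hp20]; ring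
    have m20 : mutate 0 B 2 0 = -(B 2 0) := by
      simp only [mutate, Matrix.of_apply]; rw [if_pos (by decide)]
    refine ⟨Or.inr ⟨?_, ?_, ?_⟩, ?_, ?_, ?_⟩
    · rw [m01]; linarith
    · rw [m12]; linarith
    · rw [m20]; linarith
    · rw [m01, abs_neg, abs_of_pos hp01]; exact h2a
    · rw [m12, abs_of_neg (by linarith : B 1 2 - B 2 0 * B 0 1 < 0)]; linarith
    · rw [m20, abs_neg, abs_of_pos hp20]; exact h2c
  · -- cyclic part, k = 1
    show IsCyclicMat (mutate 1 B) ∧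
      2 ≤ |mutate 1 B 0 1| ∧ 2 ≤ |mutate 1 B 1 2| ∧ 2 ≤ |mutate 1 B 2 0|
    have m01 : mutate 1 B 0 1 = -(B 0 1) := by
      simp only [mutate, Matrix.of_apply]; rw [if_pos (by decide)]
    have m12 : mutate 1 B 1 2 = -(B 1 2) := by
      simp only [mutate, Matrix.of_apply]; rw [if_pos (by decide)]
    have m20 : mutate 1 B 2 0 = B 2 0 - B 0 1 * B 1 2 := by
      simp only [mutate, Matrix.of_apply]; rw [if_neg (by decide)]
      rw [n21, n10, abs_neg, abs_neg, abs_of_pos hp12, abs_of_pos hp01]; ring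
    refine ⟨Or.inr ⟨?_, ?_, ?_⟩, ?_, ?_, ?_⟩
    · rw [m01]; linarith
    · rw [m12]; linarith
    · rw [m20]; linarith
    · rw [m01, abs_neg, abs_of_pos hp01]; exact h2a
    · rw [m12, abs_neg, abs_of_pos hp12]; exact h2b
    · rw [m20, abs_of_neg (by linarith : B 2 0 - B 0 1 * B 1 2 < 0)]; linarith
  · -- cyclic part, k = 2
    show IsCyclicMat (mutate 2 B) ∧
      2 ≤ |mutate 2 B 0 1| ∧ 2 ≤ |mutate 2 B 1 2| ∧ 2 ≤ |mutate 2 B 2 0|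
    have m01 : mutate 2 B 0 1 = B 0 1 - B 1 2 * B 2 0 := by
      simp only [mutate, Matrix.of_apply]; rw [if_neg (by decide)]
      rw [n02, n21, abs_neg, abs_neg, abs_of_pos hp20, abs_of_pos hp12]; ring
    have m12 : mutate 2 B 1 2 = -(B 1 2) := by
      simp only [mutate, Matrix.of_apply]; rw [if_pos (by decide)]
    have m20 : mutate 2 B 2 0 = -(B 2 0) := by
      simp only [mutate, Matrix.of_apply]; rw [if_pos (by decide)]
    refine ⟨Or.inr ⟨?_, ?_, ?_⟩, ?_, ?_, ?_⟩
    · rw [m01]; linarith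
    · rw [m12]; linarith
    · rw [m20]; linarith
    · rw [m01, abs_of_neg (by linarith : B 0 1 - B 1 2 * B 2 0 < 0)]; linarith
    · rw [m12, abs_neg, abs_of_pos hp12]; exact h2b
    · rw [m20, abs_neg, abs_of_pos hp20]; exact h2c
  · -- pairings, k = 0
    have w0 : mutateVecRot B 0 v 0 = v 0 := by
      simp only [mutateVecRot]; rw [if_neg (by simp [hd 0])]
    have w1 : mutateVecRot B 0 v 1 = v 1 := by
      simp only [mutateVecRot]; rw [if_neg (by rw [n10]; linarith)]
    have w2 : mutateVecRot B 0 v 2 = -v 2 - (-(B 2 0)) • v 0 := by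
      simp only [mutateVecRot]; rw [if_pos hp20, h20]
    have m01 : mutate 0 B 0 1 = -(B 0 1) := by
      simp only [mutate, Matrix.of_apply]; rw [if_pos (by decide)]
    have m02 : mutate 0 B 0 2 = B 2 0 := by
      simp only [mutate, Matrix.of_apply]; rw [if_pos (by decide), n02, neg_neg]
    have m12 : mutate 0 B 1 2 = B 1 2 - B 2 0 * B 0 1 := by
      simp only [mutate, Matrix.of_apply]; rw [if_neg (by decide)]
      rw [n10, n02, abs_neg, abs_neg, abs_of_pos hp01, abs_of_pos hp20]; ring
    have p01 : lform (mutateVecRot B 0 v 0) (mutateVecRot B 0 v 1)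
        = -|mutate 0 B 0 1| := by
      rw [w0, w1, m01, abs_neg, abs_of_pos hp01, h01]
    have p02 : lform (mutateVecRot B 0 v 0) (mutateVecRot B 0 v 2)
        = -|mutate 0 B 0 2| := by
      rw [w0, w2, m02, abs_of_pos hp20, lform_sub_right, h02, hv1 0]; ring
    have p12 : lform (mutateVecRot B 0 v 1) (mutateVecRot B 0 v 2)
        = -|mutate 0 B 1 2| := by
      rw [w1, w2, m12, abs_of_neg (by linarith : B 1 2 - B 2 0 * B 0 1 < 0),
        lform_sub_right, h12, h10]
      ring
    intro i j hij
    fin_cases i <;> fin_cases j <;>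
      first
        | exact absurd hij (by decide)
        | exact p01
        | exact p02
        | exact p12
  · -- pairings, k = 1
    have w0 : mutateVecRot B 1 v 0 = -v 0 - (-(B 0 1)) • v 1 := by
      simp only [mutateVecRot]; rw [if_pos hp01, h01]
    have w1 : mutateVecRot B 1 v 1 = v 1 := by
      simp only [mutateVecRot]; rw [if_neg (by simp [hd 1])]
    have w2 : mutateVecRot B 1 v 2 = v 2 := by
      simp only [mutateVecRot]; rw [if_neg (by rw [n21]; linarith)]
    have m01 : mutate 1 B 0 1 = -(B 0 1) := by
      simp only [mutate, Matrix.of_apply]; rw [if_pos (by decide)]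
    have m02 : mutate 1 B 0 2 = B 0 1 * B 1 2 - B 2 0 := by
      simp only [mutate, Matrix.of_apply]; rw [if_neg (by decide)]
      rw [n02, abs_of_pos hp01, abs_of_pos hp12]; ring
    have m12 : mutate 1 B 1 2 = -(B 1 2) := by
      simp only [mutate, Matrix.of_apply]; rw [if_pos (by decide)]
    have p01 : lform (mutateVecRot B 1 v 0) (mutateVecRot B 1 v 1)
        = -|mutate 1 B 0 1| := by
      rw [w0, w1, m01, abs_neg, abs_of_pos hp01, lform_sub_left, h01, hv1 1]; ring
    have p02 : lform (mutateVecRot B 1 v 0) (mutateVecRot B 1 v 2)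
        = -|mutate 1 B 0 2| := by
      rw [w0, w2, m02, abs_of_pos (by linarith : (0:ℝ) < B 0 1 * B 1 2 - B 2 0),
        lform_sub_left, h02, h12]
      ring
    have p12 : lform (mutateVecRot B 1 v 1) (mutateVecRot B 1 v 2)
        = -|mutate 1 B 1 2| := by
      rw [w1, w2, m12, abs_neg, abs_of_pos hp12, h12]
    intro i j hij
    fin_cases i <;> fin_cases j <;>
      first
        | exact absurd hij (by decide)
        | exact p01
        | exact p02
        | exact p12
  · -- pairings, k = 2
    have w0 : mutateVecRot B 2 v 0 = v 0 := by
      simp only [mutateVecRot]; rw [if_neg (by rw [n02]; linarith)]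
    have w1 : mutateVecRot B 2 v 1 = -v 1 - (-(B 1 2)) • v 2 := by
      simp only [mutateVecRot]; rw [if_pos hp12, h12]
    have w2 : mutateVecRot B 2 v 2 = v 2 := by
      simp only [mutateVecRot]; rw [if_neg (by simp [hd 2])]
    have m01 : mutate 2 B 0 1 = B 0 1 - B 1 2 * B 2 0 := by
      simp only [mutate, Matrix.of_apply]; rw [if_neg (by decide)]
      rw [n02, n21, abs_neg, abs_neg, abs_of_pos hp20, abs_of_pos hp12]; ring
    have m02 : mutate 2 B 0 2 = B 2 0 := by
      simp only [mutate, Matrix.of_apply]; rw [if_pos (by decide), n02, neg_neg]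
    have m12 : mutate 2 B 1 2 = -(B 1 2) := by
      simp only [mutate, Matrix.of_apply]; rw [if_pos (by decide)]
    have p01 : lform (mutateVecRot B 2 v 0) (mutateVecRot B 2 v 1)
        = -|mutate 2 B 0 1| := by
      rw [w0, w1, m01, abs_of_neg (by linarith : B 0 1 - B 1 2 * B 2 0 < 0),
        lform_sub_right, h01, h02]
      ring
    have p02 : lform (mutateVecRot B 2 v 0) (mutateVecRot B 2 v 2)
        = -|mutate 2 B 0 2| := by
      rw [w0, w2, m02, abs_of_pos hp20, h02]
    have p12 : lform (mutateVecRot B 2 v 1) (mutateVecRot B 2 v 2)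
        = -|mutate 2 B 1 2| := by
      rw [w1, w2, m12, abs_neg, abs_of_pos hp12, lform_sub_left, h12, hv1 2]; ring
    intro i j hij
    fin_cases i <;> fin_cases j <;>
      first
        | exact absurd hij (by decide)
        | exact p01
        | exact p02
        | exact p12
end
end

section
/- Let B be a cyclic real skew-symmetric 3×3 matrix with weights p = |b_12|, q = |b_23|, r = |b_31|, all positive. If r < 2 (i.e. some weight is smaller than 2), then B is mutation-acyclic: some matrix in its mutation class is acyclic. -/
open Matrix
noncomputable section

/-! ### Auxiliary machinery for the proof -/

/-- The standard skew-symmetric matrix with entries `b₀₁ = a`, `b₁₂ = b`, `b₂₀ = c`. -/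
def Mk (a b c : ℝ) : Matrix (Fin 3) (Fin 3) ℝ := !![0, a, -c; -a, 0, b; c, -b, 0]

lemma mut2 (a b c : ℝ) (hb : 0 ≤ b) (hc : 0 ≤ c) :
    mutate 2 (Mk a b c) = Mk (a - b*c) (-b) (-c) := by
  ext i j
  fin_cases i <;> fin_cases j <;>
    simp [mutate, Mk, abs_of_nonneg, abs_of_nonpos, hb, hc, neg_nonpos.2 hb, neg_nonpos.2 hc] <;>
    ring

lemma mut0 (a b c : ℝ) (ha : a ≤ 0) (hc : c ≤ 0) :
    mutate 0 (Mk a b c) = Mk (-a) (b + a*c) (-c) := by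
  ext i j
  fin_cases i <;> fin_cases j <;>
    simp [mutate, Mk, abs_of_nonneg, abs_of_nonpos, ha, hc, neg_nonneg.2 ha, neg_nonneg.2 hc] <;>
    ring

lemma cyc_Mk (a b c : ℝ) :
    IsCyclicMat (Mk a b c) ↔ (0 < a ∧ 0 < b ∧ 0 < c) ∨ (a < 0 ∧ b < 0 ∧ c < 0) := by
  unfold IsCyclicMat Mk
  norm_num [Matrix.cons_val_two, Matrix.vecHead, Matrix.vecTail]

/-- The sequence of successive edge weights produced by alternately mutating at `2` and `0`. -/
def useq (r p q : ℝ) : ℕ → ℝ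
  | 0 => p
  | 1 => q
  | (n+2) => r * useq r p q (n+1) - useq r p q n

lemma useq_exists_nonpos (r p q : ℝ) (hr2 : r < 2) (hpos : ∀ n, 0 < useq r p q n) :
    False := by
  set u := useq r p q with hu
  have hrec : ∀ n, u (n+2) = r * u (n+1) - u n := fun n => rfl
  set d : ℕ → ℝ := fun n => u (n+1) - u n with hdd
  have hd : ∀ n, d (n+1) = d n + (r-2) * u (n+1) := by
    intro n
    show u (n+2) - u (n+1) = (u (n+1) - u n) + (r-2) * u (n+1)
    rw [hrec]; ring
  have hmono : ∀ n m, n ≤ m → d m ≤ d n := by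
    intro n m h
    induction h with
    | refl => exact le_rfl
    | @step m' _ ih =>
      have := hd m'
      nlinarith [hpos (m'+1)]
  have hB : ∃ N, d N < 0 := by
    by_contra hno
    push_neg at hno
    have hu0 : ∀ n, u 0 ≤ u n := by
      intro n
      induction n with
      | zero => exact le_rfl
      | succ n ih =>
        have := hno n
        have : u n ≤ u (n+1) := by simp only [hdd] at this; linarith
        linarith
    have hdlin : ∀ n : ℕ, d n ≤ d 0 + n * ((r-2) * u 0) := by
      intro n
      induction n with
      | zero => simp
      | succ n ih =>
        have h1 := hd n
        have h2 : (r-2) * u (n+1) ≤ (r-2) * u 0 := by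
          have := hu0 (n+1); nlinarith
        push_cast
        linarith
    have hpos0 : 0 < (2-r) * u 0 := by nlinarith [hpos 0]
    obtain ⟨n, hn⟩ := exists_nat_gt (d 0 / ((2-r) * u 0))
    have : d 0 < n * ((2-r) * u 0) := by
      rw [div_lt_iff₀ hpos0] at hn; linarith
    have := hdlin n
    have : d n < 0 := by nlinarith
    exact absurd this (not_lt.2 (hno n))
  obtain ⟨N, hN⟩ := hB
  have hlin : ∀ k : ℕ, u (N + k) ≤ u N + k * d N := by
    intro k
    induction k with
    | zero => simp
    | succ k ih =>
      have h1 : u (N + k + 1) = u (N + k) + d (N + k) := by simp [hdd]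
      have h2 : d (N + k) ≤ d N := hmono N (N + k) (Nat.le_add_right _ _)
      push_cast
      have : N + (k + 1) = N + k + 1 := by ring
      rw [this, h1]
      linarith
  obtain ⟨k, hk⟩ := exists_nat_gt (u N / (-d N))
  have hdN : 0 < -d N := by linarith
  have : u N < k * (-d N) := by rw [div_lt_iff₀ hdN] at hk; linarith
  have : u (N + k) ≤ 0 := by have := hlin k; nlinarith
  exact absurd (hpos (N+k)) (not_lt.2 this)

lemma main_lemma (p q r : ℝ) (hp : 0 < p) (hq : 0 < q) (hr : 0 < r) (hr2 : r < 2) :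
    IsMutationAcyclic (Mk p q r) := by
  by_contra hA
  unfold IsMutationAcyclic at hA
  push_neg at hA
  have hcycall : ∀ B', MutationEquiv (Mk p q r) B' → IsCyclicMat B' := by
    intro B' h; exact hA B' h
  set u := useq r p q with hu
  have hrec : ∀ n, u (n+2) = r * u (n+1) - u n := fun n => rfl
  have key : ∀ m : ℕ, 0 < u (2*m) ∧ 0 < u (2*m+1) ∧
      MutationEquiv (Mk p q r) (Mk (u (2*m)) (u (2*m+1)) r) := by
    intro m
    induction m with
    | zero =>
      exact ⟨hp, hq, Relation.ReflTransGen.refl⟩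
    | succ m ih =>
      obtain ⟨h1, h2, hreach⟩ := ih
      have hT : MutationEquiv (Mk p q r) (Mk (u (2*m) - u (2*m+1) * r) (-(u (2*m+1))) (-r)) := by
        refine Relation.ReflTransGen.tail hreach (Or.inl ⟨2, ?_⟩)
        rw [mut2 _ _ _ h2.le hr.le]
      have hcycT := hcycall _ hT
      rw [cyc_Mk] at hcycT
      have ha' : u (2*m) - u (2*m+1) * r < 0 := by
        rcases hcycT with ⟨_, hb, _⟩ | ⟨ha, _, _⟩
        · linarith
        · exact ha
      have hnext : 0 < u (2*m+2) := by rw [hrec]; linarith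
      have hT' : MutationEquiv (Mk p q r) (Mk (u (2*m+2)) (u (2*m+3)) r) := by
        refine Relation.ReflTransGen.tail hT (Or.inl ⟨0, ?_⟩)
        rw [mut0 _ _ _ ha'.le (neg_nonpos.2 hr.le)]
        have e1 : -(u (2*m) - u (2*m+1) * r) = u (2*m+2) := by rw [hrec]; ring
        have e2 : -(u (2*m+1)) + (u (2*m) - u (2*m+1) * r) * -r = u (2*m+3) := by
          have e3 : u (2*m+3) = r * u (2*m+2) - u (2*m+1) := hrec (2*m+1)
          rw [e3, ← e1]; ring
        rw [e1, e2, neg_neg]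
      have hcycT' := hcycall _ hT'
      rw [cyc_Mk] at hcycT'
      have h3 : 0 < u (2*m+3) := by
        rcases hcycT' with ⟨_, hb, _⟩ | ⟨ha, _, _⟩
        · exact hb
        · linarith
      have e1 : 2*(m+1) = 2*m+2 := by omega
      have e2 : 2*(m+1)+1 = 2*m+3 := by omega
      refine ⟨?_, ?_, ?_⟩
      · rw [e1]; exact hnext
      · rw [e2]; exact h3
      · rw [e2, e1]; exact hT'
  have hpos : ∀ n, 0 < u n := by
    intro n
    rcases Nat.even_or_odd n with ⟨m, hm⟩ | ⟨m, hm⟩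
    · have e : n = 2*m := by omega
      rw [e]; exact (key m).1
    · rw [hm]; exact (key m).2.1
  exact useq_exists_nonpos r p q hr2 hpos

/-- a cyclic matrix with positive weights, one of which is smaller
than 2, is mutation-acyclic. -/
theorem mutation_acyclic_of_weight_lt_two
    (B : Matrix (Fin 3) (Fin 3) ℝ) (hB : Bᵀ = -B) (hcyc : IsCyclicMat B)
    (hp : 0 < |B 0 1|) (hq : 0 < |B 1 2|) (hr : 0 < |B 2 0|)
    (hr2 : |B 2 0| < 2) :
    IsMutationAcyclic B := by
  have hskew : ∀ i j : Fin 3, B j i = -B i j := by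
    intro i j
    have := congrFun (congrFun hB i) j
    simpa [Matrix.transpose_apply] using this
  have h00 : B 0 0 = 0 := by have := hskew 0 0; linarith
  have h11 : B 1 1 = 0 := by have := hskew 1 1; linarith
  have h22 : B 2 2 = 0 := by have := hskew 2 2; linarith
  have h10 : B 1 0 = -B 0 1 := hskew 0 1
  have h21 : B 2 1 = -B 1 2 := hskew 1 2
  have h02 : B 0 2 = -B 2 0 := hskew 2 0
  rcases hcyc with ⟨h1, h2, h3⟩ | ⟨h1, h2, h3⟩
  · have hBeq : B = Mk (B 0 1) (B 1 2) (B 2 0) := by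
      rw [Matrix.eta_fin_three B, h00, h11, h22, h10, h21, h02]; rfl
    rw [hBeq]
    exact main_lemma _ _ _ h1 h2 h3 (by rwa [abs_of_pos h3] at hr2)
  · set σ : Equiv.Perm (Fin 3) := Equiv.swap 0 2 with hσ
    have hs0 : σ 0 = 2 := Equiv.swap_apply_left 0 2
    have hs2 : σ 2 = 0 := Equiv.swap_apply_right 0 2
    have hs1 : σ 1 = 1 := Equiv.swap_apply_of_ne_of_ne (by decide) (by decide)
    have hCeq : (Matrix.of fun i j => B (σ i) (σ j)) = Mk (-(B 1 2)) (-(B 0 1)) (-(B 2 0)) := by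
      rw [Matrix.eta_fin_three (Matrix.of fun i j => B (σ i) (σ j))]
      simp only [Matrix.of_apply, hs0, hs1, hs2, h00, h11, h22, h10, h21, h02]
      simp [Mk]
    have hacy : IsMutationAcyclic (Mk (-(B 1 2)) (-(B 0 1)) (-(B 2 0))) :=
      main_lemma _ _ _ (by linarith) (by linarith)
        (by linarith) (by rwa [abs_of_neg h3] at hr2)
    obtain ⟨D, hD1, hD2⟩ := hacy
    refine ⟨D, ?_, hD2⟩
    refine Relation.ReflTransGen.head (Or.inr ⟨σ, rfl⟩) ?_
    rwa [hCeq]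
end
end

section
/- Let B be a cyclic real skew-symmetric 3×3 matrix with weights p = |b_12|, q = |b_23|, r = |b_31| satisfying r = 2 and p = q ≥ 2. Then B is mutation-cyclic (every matrix in its mutation class is cyclic), and moreover B is minimal in its mutation class: every matrix B' mutation-equivalent to B satisfies |b'_12| + |b'_23| + |b'_31| ≥ p + q + 2. -/
open Matrix
noncomputable section

namespace QQ2

def cl (l : ℝ) (k : ℕ) : ℝ := l ^ k + l⁻¹ ^ k

lemma cl_mul {l : ℝ} (hl : (0:ℝ) < l) (a d : ℕ) :
    cl l a * cl l (a + d) = cl l (2*a + d) + cl l d := by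
  have h2 : l ^ a * l⁻¹ ^ a = 1 := by
    rw [← mul_pow, mul_inv_cancel₀ hl.ne', one_pow]
  unfold cl
  linear_combination (l ^ d + l⁻¹ ^ d) * h2

lemma two_le_cl {l : ℝ} (hl : 1 ≤ l) (k : ℕ) : 2 ≤ cl l k := by
  have hx : (0:ℝ) < l ^ k := pow_pos (by linarith) k
  have h1 : l ^ k * (l ^ k)⁻¹ = 1 := mul_inv_cancel₀ (ne_of_gt hx)
  unfold cl
  rw [inv_pow]
  nlinarith [sq_nonneg (l ^ k - 1), inv_pos.mpr hx]

lemma cl_le_cl {l : ℝ} (hl : 1 ≤ l) {a b : ℕ} (h : a ≤ b) : cl l a ≤ cl l b := by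
  induction b, h using Nat.le_induction with
  | base => exact le_refl _
  | succ n hn ih =>
    refine le_trans ih ?_
    have hl0 : (0:ℝ) < l := by linarith
    have hinv : l⁻¹ ≤ 1 := inv_le_one_of_one_le₀ hl
    have hinv0 : (0:ℝ) < l⁻¹ := inv_pos.mpr hl0
    have h1 : (1:ℝ) ≤ l ^ n := one_le_pow₀ hl
    have h2 : l⁻¹ ^ (n+1) ≤ 1 := pow_le_one₀ (le_of_lt hinv0) hinv
    have h3 : l * l⁻¹ = 1 := mul_inv_cancel₀ hl0.ne'
    have h4 : l * l⁻¹ ^ (n+1) = l⁻¹ ^ n := by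
      rw [pow_succ, show l * (l⁻¹ ^ n * l⁻¹) = (l * l⁻¹) * l⁻¹ ^ n by ring, h3, one_mul]
    unfold cl
    rw [pow_succ, pow_succ]
    nlinarith [mul_nonneg (sub_nonneg.mpr hl) (sub_nonneg.mpr (le_trans h2 h1)), h4]

def Tri (l x y z : ℝ) : Prop :=
  ∃ m n : ℕ, 1 ≤ m + n ∧
    ((x = cl l m ∧ y = cl l n ∧ z = cl l (m + n)) ∨
     (x = cl l m ∧ y = cl l (m + n) ∧ z = cl l n) ∨
     (x = cl l (m + n) ∧ y = cl l m ∧ z = cl l n))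

lemma tri_swap_xy {l x y z : ℝ} (h : Tri l x y z) : Tri l y x z := by
  obtain ⟨m, n, hmn, h1 | h2 | h3⟩ := h
  · exact ⟨n, m, by omega, Or.inl ⟨h1.2.1, h1.1, by rw [h1.2.2, Nat.add_comm]⟩⟩
  · exact ⟨m, n, hmn, Or.inr (Or.inr ⟨h2.2.1, h2.1, h2.2.2⟩)⟩
  · exact ⟨m, n, hmn, Or.inr (Or.inl ⟨h3.2.1, h3.1, h3.2.2⟩)⟩

lemma tri_swap_yz {l x y z : ℝ} (h : Tri l x y z) : Tri l x z y := by
  obtain ⟨m, n, hmn, h1 | h2 | h3⟩ := h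
  · exact ⟨m, n, hmn, Or.inr (Or.inl ⟨h1.1, h1.2.2, h1.2.1⟩)⟩
  · exact ⟨m, n, hmn, Or.inl ⟨h2.1, h2.2.2, h2.2.1⟩⟩
  · exact ⟨n, m, by omega, Or.inr (Or.inr ⟨by rw [h3.1, Nat.add_comm], h3.2.2, h3.2.1⟩)⟩

lemma tri_rot {l x y z : ℝ} (h : Tri l x y z) : Tri l y z x :=
  tri_swap_yz (tri_swap_xy h)

lemma tri_mut_y {l : ℝ} (hl : 1 ≤ l) {x y z : ℝ} (h : Tri l x y z) :
    2 ≤ x * z - y ∧ Tri l x (x * z - y) z := by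
  have hl0 : (0:ℝ) < l := by linarith
  obtain ⟨m, n, hmn, h1 | h2 | h3⟩ := h
  · obtain ⟨hx, hy, hz⟩ := h1
    have key : x * z - y = cl l (2*m + n) := by
      have := cl_mul hl0 m n
      rw [hx, hy, hz]; linarith
    refine ⟨key ▸ two_le_cl hl _, m, m + n, by omega,
      Or.inr (Or.inl ⟨hx, ?_, hz⟩)⟩
    rw [key, show m + (m + n) = 2*m + n by ring]
  · obtain ⟨hx, hy, hz⟩ := h2
    rcases Nat.le_total n m with hnm | hmn'
    · have key : x * z - y = cl l (m - n) := by
        have := cl_mul hl0 n (m - n)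
        rw [show n + (m - n) = m by omega, show 2*n + (m-n) = m + n by omega] at this
        rw [hx, hy, hz]
        linarith [this]
      refine ⟨key ▸ two_le_cl hl _, m - n, n, by omega,
        Or.inr (Or.inr ⟨?_, key, hz⟩)⟩
      rw [hx, show m - n + n = m by omega]
    · have key : x * z - y = cl l (n - m) := by
        have := cl_mul hl0 m (n - m)
        rw [show m + (n - m) = n by omega, show 2*m + (n-m) = m + n by omega] at this
        rw [hx, hy, hz]
        linarith [this]
      refine ⟨key ▸ two_le_cl hl _, m, n - m, by omega,
        Or.inl ⟨hx, key, ?_⟩⟩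
      rw [hz, show m + (n - m) = n by omega]
  · obtain ⟨hx, hy, hz⟩ := h3
    have key : x * z - y = cl l (m + 2*n) := by
      have := cl_mul hl0 n m
      rw [show 2*n + m = m + 2*n by ring] at this
      rw [hx, hy, hz, show m + n = n + m by ring]
      linarith [this]
    refine ⟨key ▸ two_le_cl hl _, m + n, n, by omega,
      Or.inr (Or.inl ⟨hx, ?_, hz⟩)⟩
    rw [key, show m + n + n = m + 2*n by ring]

lemma tri_mut_x {l : ℝ} (hl : 1 ≤ l) {x y z : ℝ} (h : Tri l x y z) :
    2 ≤ y * z - x ∧ Tri l (y * z - x) y z := by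
  obtain ⟨h1, h2⟩ := tri_mut_y hl (tri_swap_xy h)
  exact ⟨h1, tri_swap_xy h2⟩

lemma tri_mut_z {l : ℝ} (hl : 1 ≤ l) {x y z : ℝ} (h : Tri l x y z) :
    2 ≤ x * y - z ∧ Tri l x y (x * y - z) := by
  obtain ⟨h1, h2⟩ := tri_mut_y hl (tri_swap_yz h)
  exact ⟨h1, tri_swap_yz h2⟩

def Inv (l : ℝ) (B : Matrix (Fin 3) (Fin 3) ℝ) : Prop :=
  Bᵀ = -B ∧ IsCyclicMat B ∧ Tri l |B 0 1| |B 1 2| |B 2 0|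

lemma skew_entry {B : Matrix (Fin 3) (Fin 3) ℝ} (hB : Bᵀ = -B) (i j : Fin 3) :
    B j i = -B i j := by
  have := congrFun (congrFun hB i) j
  simpa using this

lemma mutate_skew {B : Matrix (Fin 3) (Fin 3) ℝ} (hB : Bᵀ = -B) (k : Fin 3) :
    (mutate k B)ᵀ = -(mutate k B) := by
  have hsk := skew_entry hB
  funext i j
  simp only [Matrix.transpose_apply, Matrix.neg_apply, mutate, Matrix.of_apply]
  by_cases h : i = k ∨ j = k
  · rw [if_pos h.symm, if_pos h, hsk i j]
  · rw [if_neg (fun hh => h hh.symm), if_neg h, hsk i j, hsk k j, hsk i k, abs_neg, abs_neg]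
    ring

lemma mutate_neg (k : Fin 3) (B : Matrix (Fin 3) (Fin 3) ℝ) :
    mutate k (-B) = -(mutate k B) := by
  funext i j
  simp only [mutate, Matrix.of_apply, Matrix.neg_apply, abs_neg]
  split_ifs with h
  · ring
  · ring

lemma inv_neg {l : ℝ} {B : Matrix (Fin 3) (Fin 3) ℝ} (h : Inv l B) : Inv l (-B) := by
  obtain ⟨hB, hcyc, ht⟩ := h
  refine ⟨by rw [Matrix.transpose_neg, hB], ?_, ?_⟩
  · rcases hcyc with ⟨h1, h2, h3⟩ | ⟨h1, h2, h3⟩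
    · exact Or.inr ⟨by simpa using h1, by simpa using h2, by simpa using h3⟩
    · exact Or.inl ⟨by simpa using h1, by simpa using h2, by simpa using h3⟩
  · simpa [Matrix.neg_apply, abs_neg] using ht


lemma inv_mutate_pos' {l : ℝ} (hl : 1 ≤ l) {B : Matrix (Fin 3) (Fin 3) ℝ}
    (hB : Bᵀ = -B) (hpos : 0 < B 0 1 ∧ 0 < B 1 2 ∧ 0 < B 2 0)
    (ht : Tri l |B 0 1| |B 1 2| |B 2 0|) (k : Fin 3) :
    Inv l (mutate k B) := by
  obtain ⟨ha, hb, hc⟩ := hpos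
  have hsk := skew_entry hB
  have hk : ∀ k : Fin 3, k = 0 ∨ k = 1 ∨ k = 2 := by decide
  have habs : |B 0 1| = B 0 1 := abs_of_pos ha
  have hbabs : |B 1 2| = B 1 2 := abs_of_pos hb
  have hcabs : |B 2 0| = B 2 0 := abs_of_pos hc
  rcases hk k with rfl | rfl | rfl
  · -- mutation at 0 changes the (1,2) entry
    obtain ⟨hv2, htri⟩ := tri_mut_y hl ht
    have hval : |B 0 1| * |B 2 0| - |B 1 2| = B 0 1 * B 2 0 - B 1 2 := by
      rw [habs, hbabs, hcabs]
    rw [hval] at hv2 htri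
    have E01 : mutate 0 B 0 1 = -B 0 1 := by
      unfold mutate
      rw [Matrix.of_apply, if_pos (by decide : (0:Fin 3) = 0 ∨ (1:Fin 3) = 0)]
    have E20 : mutate 0 B 2 0 = -B 2 0 := by
      unfold mutate
      rw [Matrix.of_apply, if_pos (by decide : (2:Fin 3) = 0 ∨ (0:Fin 3) = 0)]
    have E12 : mutate 0 B 1 2 = B 1 2 - B 0 1 * B 2 0 := by
      unfold mutate
      rw [Matrix.of_apply, if_neg (by decide : ¬((1:Fin 3) = 0 ∨ (2:Fin 3) = 0))]
      rw [hsk 0 1, hsk 2 0, abs_neg, abs_neg, habs, hcabs]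
      ring
    refine ⟨mutate_skew hB 0, ?_, ?_⟩
    · exact Or.inr ⟨by rw [E01]; linarith, by rw [E12]; linarith, by rw [E20]; linarith⟩
    · rw [E01, E12, E20, abs_neg, abs_neg,
        show B 1 2 - B 0 1 * B 2 0 = -(B 0 1 * B 2 0 - B 1 2) by ring, abs_neg,
        abs_of_pos (by linarith : (0:ℝ) < B 0 1 * B 2 0 - B 1 2)]
      exact htri
  · -- mutation at 1 changes the (2,0) entry
    obtain ⟨hv2, htri⟩ := tri_mut_z hl ht
    have hval : |B 0 1| * |B 1 2| - |B 2 0| = B 0 1 * B 1 2 - B 2 0 := by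
      rw [habs, hbabs, hcabs]
    rw [hval] at hv2 htri
    have E01 : mutate 1 B 0 1 = -B 0 1 := by
      unfold mutate
      rw [Matrix.of_apply, if_pos (by decide : (0:Fin 3) = 1 ∨ (1:Fin 3) = 1)]
    have E12 : mutate 1 B 1 2 = -B 1 2 := by
      unfold mutate
      rw [Matrix.of_apply, if_pos (by decide : (1:Fin 3) = 1 ∨ (2:Fin 3) = 1)]
    have E20 : mutate 1 B 2 0 = B 2 0 - B 0 1 * B 1 2 := by
      unfold mutate
      rw [Matrix.of_apply, if_neg (by decide : ¬((2:Fin 3) = 1 ∨ (0:Fin 3) = 1))]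
      rw [hsk 1 2, hsk 0 1, abs_neg, abs_neg, hbabs, habs]
      ring
    refine ⟨mutate_skew hB 1, ?_, ?_⟩
    · exact Or.inr ⟨by rw [E01]; linarith, by rw [E12]; linarith, by rw [E20]; linarith⟩
    · rw [E01, E12, E20, abs_neg, abs_neg,
        show B 2 0 - B 0 1 * B 1 2 = -(B 0 1 * B 1 2 - B 2 0) by ring, abs_neg,
        abs_of_pos (by linarith : (0:ℝ) < B 0 1 * B 1 2 - B 2 0)]
      exact htri
  · -- mutation at 2 changes the (0,1) entry
    obtain ⟨hv2, htri⟩ := tri_mut_x hl ht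
    have hval : |B 1 2| * |B 2 0| - |B 0 1| = B 1 2 * B 2 0 - B 0 1 := by
      rw [habs, hbabs, hcabs]
    rw [hval] at hv2 htri
    have E12 : mutate 2 B 1 2 = -B 1 2 := by
      unfold mutate
      rw [Matrix.of_apply, if_pos (by decide : (1:Fin 3) = 2 ∨ (2:Fin 3) = 2)]
    have E20 : mutate 2 B 2 0 = -B 2 0 := by
      unfold mutate
      rw [Matrix.of_apply, if_pos (by decide : (2:Fin 3) = 2 ∨ (0:Fin 3) = 2)]
    have E01 : mutate 2 B 0 1 = B 0 1 - B 1 2 * B 2 0 := by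
      unfold mutate
      rw [Matrix.of_apply, if_neg (by decide : ¬((0:Fin 3) = 2 ∨ (1:Fin 3) = 2))]
      rw [hsk 2 0, hsk 1 2, abs_neg, abs_neg, hcabs, hbabs]
      ring
    refine ⟨mutate_skew hB 2, ?_, ?_⟩
    · exact Or.inr ⟨by rw [E01]; linarith, by rw [E12]; linarith, by rw [E20]; linarith⟩
    · rw [E01, E12, E20, abs_neg, abs_neg,
        show B 0 1 - B 1 2 * B 2 0 = -(B 1 2 * B 2 0 - B 0 1) by ring, abs_neg,
        abs_of_pos (by linarith : (0:ℝ) < B 1 2 * B 2 0 - B 0 1)]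
      exact htri

lemma inv_perm {l : ℝ} {B : Matrix (Fin 3) (Fin 3) ℝ} (h : Inv l B) (σ : Equiv.Perm (Fin 3)) :
    Inv l (Matrix.of fun i j => B (σ i) (σ j)) := by
  obtain ⟨hB, hcyc, ht⟩ := h
  have hsk := skew_entry hB
  have hskew : (Matrix.of fun i j => B (σ i) (σ j))ᵀ
      = -(Matrix.of fun i j => B (σ i) (σ j)) := by
    funext i j
    simp only [Matrix.transpose_apply, Matrix.neg_apply, Matrix.of_apply]
    exact hsk (σ i) (σ j)
  have hval : ∀ x : Fin 3, σ x = 0 ∨ σ x = 1 ∨ σ x = 2 := fun x => by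
    have h3 : ∀ y : Fin 3, y = 0 ∨ y = 1 ∨ y = 2 := by decide
    exact h3 (σ x)
  have hne : ∀ x y : Fin 3, x ≠ y → σ x ≠ σ y := fun x y hxy h' => hxy (σ.injective h')
  have cycgoal : ∀ M : Matrix (Fin 3) (Fin 3) ℝ, M = (Matrix.of fun i j => B (σ i) (σ j)) →
      True := fun _ _ => trivial
  rcases hval 0 with h0 | h0 | h0 <;> rcases hval 1 with h1 | h1 | h1
  · exact absurd (h0.trans h1.symm) (hne 0 1 (by decide))
  · -- σ = (0,1,2)
    have h2 : σ 2 = 2 := by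
      rcases hval 2 with h | h | h
      · exact absurd (h.trans h0.symm) (hne 2 0 (by decide))
      · exact absurd (h.trans h1.symm) (hne 2 1 (by decide))
      · exact h
    refine ⟨hskew, ?_, ?_⟩
    · show (0 < B (σ 0) (σ 1) ∧ 0 < B (σ 1) (σ 2) ∧ 0 < B (σ 2) (σ 0)) ∨
        (B (σ 0) (σ 1) < 0 ∧ B (σ 1) (σ 2) < 0 ∧ B (σ 2) (σ 0) < 0)
      rw [h0, h1, h2]
      exact hcyc
    · show Tri l |B (σ 0) (σ 1)| |B (σ 1) (σ 2)| |B (σ 2) (σ 0)|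
      rw [h0, h1, h2]
      exact ht
  · -- σ = (0,2,1)
    have h2 : σ 2 = 1 := by
      rcases hval 2 with h | h | h
      · exact absurd (h.trans h0.symm) (hne 2 0 (by decide))
      · exact h
      · exact absurd (h.trans h1.symm) (hne 2 1 (by decide))
    refine ⟨hskew, ?_, ?_⟩
    · show (0 < B (σ 0) (σ 1) ∧ 0 < B (σ 1) (σ 2) ∧ 0 < B (σ 2) (σ 0)) ∨
        (B (σ 0) (σ 1) < 0 ∧ B (σ 1) (σ 2) < 0 ∧ B (σ 2) (σ 0) < 0)
      rw [h0, h1, h2, hsk 2 0, hsk 1 2, hsk 0 1]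
      rcases hcyc with ⟨p1, p2, p3⟩ | ⟨p1, p2, p3⟩
      · exact Or.inr ⟨by linarith, by linarith, by linarith⟩
      · exact Or.inl ⟨by linarith, by linarith, by linarith⟩
    · show Tri l |B (σ 0) (σ 1)| |B (σ 1) (σ 2)| |B (σ 2) (σ 0)|
      rw [h0, h1, h2, hsk 2 0, hsk 1 2, hsk 0 1, abs_neg, abs_neg, abs_neg]
      exact tri_swap_xy (tri_rot ht)
  · -- σ = (1,0,2)
    have h2 : σ 2 = 2 := by
      rcases hval 2 with h | h | h
      · exact absurd (h.trans h1.symm) (hne 2 1 (by decide))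
      · exact absurd (h.trans h0.symm) (hne 2 0 (by decide))
      · exact h
    refine ⟨hskew, ?_, ?_⟩
    · show (0 < B (σ 0) (σ 1) ∧ 0 < B (σ 1) (σ 2) ∧ 0 < B (σ 2) (σ 0)) ∨
        (B (σ 0) (σ 1) < 0 ∧ B (σ 1) (σ 2) < 0 ∧ B (σ 2) (σ 0) < 0)
      rw [h0, h1, h2, hsk 0 1, hsk 2 0, hsk 1 2]
      rcases hcyc with ⟨p1, p2, p3⟩ | ⟨p1, p2, p3⟩
      · exact Or.inr ⟨by linarith, by linarith, by linarith⟩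
      · exact Or.inl ⟨by linarith, by linarith, by linarith⟩
    · show Tri l |B (σ 0) (σ 1)| |B (σ 1) (σ 2)| |B (σ 2) (σ 0)|
      rw [h0, h1, h2, hsk 0 1, hsk 2 0, hsk 1 2, abs_neg, abs_neg, abs_neg]
      exact tri_swap_yz ht
  · exact absurd (h0.trans h1.symm) (hne 0 1 (by decide))
  · -- σ = (1,2,0)
    have h2 : σ 2 = 0 := by
      rcases hval 2 with h | h | h
      · exact h
      · exact absurd (h.trans h0.symm) (hne 2 0 (by decide))
      · exact absurd (h.trans h1.symm) (hne 2 1 (by decide))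
    refine ⟨hskew, ?_, ?_⟩
    · show (0 < B (σ 0) (σ 1) ∧ 0 < B (σ 1) (σ 2) ∧ 0 < B (σ 2) (σ 0)) ∨
        (B (σ 0) (σ 1) < 0 ∧ B (σ 1) (σ 2) < 0 ∧ B (σ 2) (σ 0) < 0)
      rw [h0, h1, h2]
      rcases hcyc with ⟨p1, p2, p3⟩ | ⟨p1, p2, p3⟩
      · exact Or.inl ⟨p2, p3, p1⟩
      · exact Or.inr ⟨p2, p3, p1⟩
    · show Tri l |B (σ 0) (σ 1)| |B (σ 1) (σ 2)| |B (σ 2) (σ 0)|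
      rw [h0, h1, h2]
      exact tri_rot ht
  · -- σ = (2,0,1)
    have h2 : σ 2 = 1 := by
      rcases hval 2 with h | h | h
      · exact absurd (h.trans h1.symm) (hne 2 1 (by decide))
      · exact h
      · exact absurd (h.trans h0.symm) (hne 2 0 (by decide))
    refine ⟨hskew, ?_, ?_⟩
    · show (0 < B (σ 0) (σ 1) ∧ 0 < B (σ 1) (σ 2) ∧ 0 < B (σ 2) (σ 0)) ∨
        (B (σ 0) (σ 1) < 0 ∧ B (σ 1) (σ 2) < 0 ∧ B (σ 2) (σ 0) < 0)
      rw [h0, h1, h2]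
      rcases hcyc with ⟨p1, p2, p3⟩ | ⟨p1, p2, p3⟩
      · exact Or.inl ⟨p3, p1, p2⟩
      · exact Or.inr ⟨p3, p1, p2⟩
    · show Tri l |B (σ 0) (σ 1)| |B (σ 1) (σ 2)| |B (σ 2) (σ 0)|
      rw [h0, h1, h2]
      exact tri_rot (tri_rot ht)
  · -- σ = (2,1,0)
    have h2 : σ 2 = 0 := by
      rcases hval 2 with h | h | h
      · exact h
      · exact absurd (h.trans h1.symm) (hne 2 1 (by decide))
      · exact absurd (h.trans h0.symm) (hne 2 0 (by decide))
    refine ⟨hskew, ?_, ?_⟩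
    · show (0 < B (σ 0) (σ 1) ∧ 0 < B (σ 1) (σ 2) ∧ 0 < B (σ 2) (σ 0)) ∨
        (B (σ 0) (σ 1) < 0 ∧ B (σ 1) (σ 2) < 0 ∧ B (σ 2) (σ 0) < 0)
      rw [h0, h1, h2, hsk 1 2, hsk 0 1, hsk 2 0]
      rcases hcyc with ⟨p1, p2, p3⟩ | ⟨p1, p2, p3⟩
      · exact Or.inr ⟨by linarith, by linarith, by linarith⟩
      · exact Or.inl ⟨by linarith, by linarith, by linarith⟩
    · show Tri l |B (σ 0) (σ 1)| |B (σ 1) (σ 2)| |B (σ 2) (σ 0)|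
      rw [h0, h1, h2, hsk 1 2, hsk 0 1, hsk 2 0, abs_neg, abs_neg, abs_neg]
      exact tri_swap_xy ht
  · exact absurd (h0.trans h1.symm) (hne 0 1 (by decide))

lemma inv_step {l : ℝ} (hl : 1 ≤ l) {B B' : Matrix (Fin 3) (Fin 3) ℝ}
    (h : MutationStep B B') (hI : Inv l B) : Inv l B' := by
  obtain ⟨hB, hcyc, ht⟩ := hI
  rcases h with ⟨k, rfl⟩ | ⟨σ, rfl⟩
  · rcases hcyc with hpos | hneg
    · exact inv_mutate_pos' hl hB hpos ht k
    · have hBn : (-B)ᵀ = -(-B) := by rw [Matrix.transpose_neg, hB]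
      have hposn : 0 < (-B) 0 1 ∧ 0 < (-B) 1 2 ∧ 0 < (-B) 2 0 := by
        refine ⟨?_, ?_, ?_⟩ <;> simp only [Matrix.neg_apply] <;>
          linarith [hneg.1, hneg.2.1, hneg.2.2]
      have htn : Tri l |(-B) 0 1| |(-B) 1 2| |(-B) 2 0| := by
        simpa [Matrix.neg_apply, abs_neg] using ht
      have h1 : Inv l (mutate k (-B)) := inv_mutate_pos' hl hBn hposn htn k
      have h2 := inv_neg h1
      rwa [mutate_neg, neg_neg] at h2
  · exact inv_perm ⟨hB, hcyc, ht⟩ σ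

end QQ2

/-- a cyclic matrix with weights `p = q ≥ 2` and `r = 2` is
mutation-cyclic and minimal in its mutation class. -/
theorem mutation_cyclic_and_minimal_of_qq2
    (B : Matrix (Fin 3) (Fin 3) ℝ) (hB : Bᵀ = -B) (hcyc : IsCyclicMat B)
    (hr2 : |B 2 0| = 2) (hpq : |B 0 1| = |B 1 2|) (h2 : 2 ≤ |B 0 1|) :
    IsMutationCyclic B ∧
    ∀ B', MutationEquiv B B' →
      |B 0 1| + |B 1 2| + 2 ≤ |B' 0 1| + |B' 1 2| + |B' 2 0| := by
  have hp2 : (2:ℝ) ≤ |B 0 1| := h2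
  set s := Real.sqrt (|B 0 1|^2 - 4) with hsdef
  have hs2 : s^2 = |B 0 1|^2 - 4 := Real.sq_sqrt (by nlinarith)
  have hs0 : 0 ≤ s := Real.sqrt_nonneg _
  set l := (|B 0 1| + s)/2 with hld
  have hl : 1 ≤ l := by rw [hld]; linarith
  have hlinv : l⁻¹ = (|B 0 1| - s)/2 := by
    have hmul : l * ((|B 0 1| - s)/2) = 1 := by
      rw [hld]; linear_combination (-(1:ℝ)/4) * hs2
    exact inv_eq_of_mul_eq_one_right hmul
  have hcl1 : QQ2.cl l 1 = |B 0 1| := by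
    rw [QQ2.cl, pow_one, pow_one, hlinv, hld]; ring
  have hcl0 : QQ2.cl l 0 = 2 := by norm_num [QQ2.cl]
  have hInvB : QQ2.Inv l B := by
    refine ⟨hB, hcyc, 1, 0, by omega, Or.inr (Or.inl ⟨?_, ?_, ?_⟩)⟩
    · rw [hcl1]
    · rw [show (1+0 : ℕ) = 1 from rfl, hcl1]; exact hpq.symm
    · rw [hcl0]; exact hr2
  have key : ∀ B', MutationEquiv B B' → QQ2.Inv l B' := by
    intro B' h
    have h' : Relation.ReflTransGen MutationStep B B' := h
    clear h
    induction h' with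
    | refl => exact hInvB
    | tail _ hstep ih => exact QQ2.inv_step hl hstep ih
  constructor
  · intro B' h
    exact (key B' h).2.1
  · intro B' h
    obtain ⟨_, _, m, n, hmn, htri⟩ := key B' h
    have hb : |B 0 1| + |B 1 2| + 2 ≤ QQ2.cl l m + QQ2.cl l n + QQ2.cl l (m+n) := by
      have c2m := QQ2.two_le_cl hl m
      have c2n := QQ2.two_le_cl hl n
      have hmn1 := QQ2.cl_le_cl hl (show 1 ≤ m + n by omega)
      rw [← hpq, ← hcl1]
      rcases Nat.eq_zero_or_pos m with rfl | h1
      · have hn1 := QQ2.cl_le_cl hl (show 1 ≤ n by omega)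
        linarith [hcl0]
      · have hm1 := QQ2.cl_le_cl hl (show 1 ≤ m by omega)
        linarith
    rcases htri with ⟨e1, e2, e3⟩ | ⟨e1, e2, e3⟩ | ⟨e1, e2, e3⟩ <;>
      rw [e1, e2, e3] <;> linarith [hb]
end
end

section
/- Let ℝ^{2,1} denote ℝ³ with the Lorentzian symmetric bilinear form ⟨x,y⟩ = x_1y_1 + x_2y_2 − x_3y_3. Let B be a cyclic real skew-symmetric 3×3 matrix with weights p = |b_12|, q = |b_23|, r = |b_31|. If there exist vectors v_1, v_2, v_3 ∈ ℝ^{2,1} with ⟨v_i,v_i⟩ = −2 for i = 1,2,3 and ⟨v_1,v_2⟩ = −p, ⟨v_2,v_3⟩ = −q, ⟨v_3,v_1⟩ = −r (a realization of B by π-rotations), then B is mutation-cyclic. Equivalently, a mutation-acyclic matrix admits no realization by π-rotations. -/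
open Matrix
noncomputable section

-- ===== Auxiliary development =====

lemma mutate_app (k : Fin 3) (B : Matrix (Fin 3) (Fin 3) ℝ) (i j : Fin 3) :
    mutate k B i j = if i = k ∨ j = k then -B i j
      else B i j + (|B i k| * B k j + B i k * |B k j|) / 2 := rfl

lemma fin3cases (i : Fin 3) : i = 0 ∨ i = 1 ∨ i = 2 := by fin_cases i <;> simp

/-- The mutation-invariant "good" predicate: skew-symmetric, cyclic, all weights
at least `2`, and Markov constant at most `4`. -/
def Good (B : Matrix (Fin 3) (Fin 3) ℝ) : Prop :=
  (∀ i j, B j i = -B i j) ∧ IsCyclicMat B ∧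
  2 ≤ |B 0 1| ∧ 2 ≤ |B 1 2| ∧ 2 ≤ |B 2 0| ∧
  |B 0 1|^2 + |B 1 2|^2 + |B 2 0|^2 ≤ |B 0 1| * |B 1 2| * |B 2 0| + 4

lemma mutate_skew (k : Fin 3) (B : Matrix (Fin 3) (Fin 3) ℝ)
    (hB : ∀ i j, B j i = -B i j) : ∀ i j, mutate k B j i = -(mutate k B i j) := by
  intro i j
  simp only [mutate_app]
  by_cases h : i = k ∨ j = k
  · rw [if_pos h.symm, if_pos h, hB i j]
  · rw [if_neg (fun hc => h hc.symm), if_neg h, hB i j, hB k j, hB k i, abs_neg, abs_neg]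
    ring

lemma mut_core (t u w : ℝ) (ht : 2 ≤ t) (hu : 2 ≤ u) (hw : 2 ≤ w)
    (hC : t^2 + u^2 + w^2 ≤ t*u*w + 4) :
    2 ≤ u*w - t ∧ (u*w-t)^2 + u^2 + w^2 ≤ (u*w-t)*u*w + 4 := by
  constructor
  · by_contra hcon
    push_neg at hcon
    nlinarith [sq_nonneg (u-w), mul_nonneg (sub_nonneg.2 ht) (sub_nonneg.2 hu),
      mul_nonneg (sub_nonneg.2 hu) (sub_nonneg.2 hw),
      mul_nonneg (mul_nonneg (sub_nonneg.2 ht) (sub_nonneg.2 hu)) (sub_nonneg.2 hw),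
      mul_nonneg (sub_nonneg.2 ht) (sq_nonneg (u-w))]
  · nlinarith [hC]

lemma good_of_entries (B' : Matrix (Fin 3) (Fin 3) ℝ)
    (hsk : ∀ i j, B' j i = -B' i j) (p q r s : ℝ)
    (hp : 2 ≤ p) (hq : 2 ≤ q) (hr : 2 ≤ r)
    (hC : p^2 + q^2 + r^2 ≤ p*q*r + 4) (hs : s = 1 ∨ s = -1)
    (h01 : B' 0 1 = s * p) (h12 : B' 1 2 = s * q) (h20 : B' 2 0 = s * r) :
    Good B' := by
  have hp0 : (0:ℝ) < p := by linarith
  have hq0 : (0:ℝ) < q := by linarith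
  have hr0 : (0:ℝ) < r := by linarith
  rcases hs with rfl | rfl
  · rw [one_mul] at h01 h12 h20
    refine ⟨hsk, Or.inl ⟨h01 ▸ hp0, h12 ▸ hq0, h20 ▸ hr0⟩, ?_, ?_, ?_, ?_⟩ <;>
      simp only [h01, h12, h20, abs_of_pos hp0, abs_of_pos hq0, abs_of_pos hr0] <;>
      assumption
  · have e1 : B' 0 1 = -p := by rw [h01]; ring
    have e2 : B' 1 2 = -q := by rw [h12]; ring
    have e3 : B' 2 0 = -r := by rw [h20]; ring
    refine ⟨hsk, Or.inr ⟨by rw [e1]; linarith, by rw [e2]; linarith, by rw [e3]; linarith⟩,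
      ?_, ?_, ?_, ?_⟩ <;>
      simp only [e1, e2, e3, abs_neg, abs_of_pos hp0, abs_of_pos hq0, abs_of_pos hr0] <;>
      assumption

set_option maxHeartbeats 1600000 in
lemma good_mutate (k : Fin 3) (B : Matrix (Fin 3) (Fin 3) ℝ) (h : Good B) :
    Good (mutate k B) := by
  obtain ⟨hsk, hcyc, hp, hq, hr, hC⟩ := h
  have hsk' := mutate_skew k B hsk
  rcases fin3cases k with rfl | rfl | rfl
  · -- k = 0 : entry (1,2) changes
    have e01 : mutate 0 B 0 1 = -B 0 1 := by rw [mutate_app, if_pos (Or.inl rfl)]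
    have e20 : mutate 0 B 2 0 = -B 2 0 := by rw [mutate_app, if_pos (Or.inr rfl)]
    have e12 : mutate 0 B 1 2
        = B 1 2 + (|B 0 1| * (-B 2 0) + (-B 0 1) * |B 2 0|) / 2 := by
      rw [mutate_app, if_neg (by decide), hsk 0 1, hsk 2 0, abs_neg, abs_neg]
    rcases hcyc with ⟨h1, h2, h3⟩ | ⟨h1, h2, h3⟩
    · rw [abs_of_pos h1] at hp hC; rw [abs_of_pos h2] at hq hC; rw [abs_of_pos h3] at hr hC
      have key := mut_core (B 1 2) (B 0 1) (B 2 0) hq hp hr (by nlinarith [hC])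
      refine good_of_entries _ hsk' (B 0 1) (B 0 1 * B 2 0 - B 1 2) (B 2 0) (-1)
        hp key.1 hr (by nlinarith [key.2]) (Or.inr rfl) (by rw [e01]; ring)
        (by rw [e12, abs_of_pos h1, abs_of_pos h3]; ring) (by rw [e20]; ring)
    · rw [abs_of_neg h1] at hp hC; rw [abs_of_neg h2] at hq hC; rw [abs_of_neg h3] at hr hC
      have key := mut_core (-B 1 2) (-B 0 1) (-B 2 0) hq hp hr (by nlinarith [hC])
      refine good_of_entries _ hsk' (-B 0 1) (B 0 1 * B 2 0 + B 1 2) (-B 2 0) 1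
        hp (by nlinarith [key.1]) hr (by nlinarith [key.2]) (Or.inl rfl) (by rw [e01]; ring)
        (by rw [e12, abs_of_neg h1, abs_of_neg h3]; ring) (by rw [e20]; ring)
  · -- k = 1 : entry (2,0) changes
    have e01 : mutate 1 B 0 1 = -B 0 1 := by rw [mutate_app, if_pos (Or.inr rfl)]
    have e12 : mutate 1 B 1 2 = -B 1 2 := by rw [mutate_app, if_pos (Or.inl rfl)]
    have e20 : mutate 1 B 2 0
        = B 2 0 + (|B 1 2| * (-B 0 1) + (-B 1 2) * |B 0 1|) / 2 := by
      rw [mutate_app, if_neg (by decide), hsk 1 2, hsk 0 1, abs_neg, abs_neg]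
    rcases hcyc with ⟨h1, h2, h3⟩ | ⟨h1, h2, h3⟩
    · rw [abs_of_pos h1] at hp hC; rw [abs_of_pos h2] at hq hC; rw [abs_of_pos h3] at hr hC
      have key := mut_core (B 2 0) (B 1 2) (B 0 1) hr hq hp (by nlinarith [hC])
      refine good_of_entries _ hsk' (B 0 1) (B 1 2) (B 1 2 * B 0 1 - B 2 0) (-1)
        hp hq key.1 (by nlinarith [key.2]) (Or.inr rfl) (by rw [e01]; ring)
        (by rw [e12]; ring) (by rw [e20, abs_of_pos h2, abs_of_pos h1]; ring)
    · rw [abs_of_neg h1] at hp hC; rw [abs_of_neg h2] at hq hC; rw [abs_of_neg h3] at hr hC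
      have key := mut_core (-B 2 0) (-B 1 2) (-B 0 1) hr hq hp (by nlinarith [hC])
      refine good_of_entries _ hsk' (-B 0 1) (-B 1 2) (B 1 2 * B 0 1 + B 2 0) 1
        hp hq (by nlinarith [key.1]) (by nlinarith [key.2]) (Or.inl rfl) (by rw [e01]; ring)
        (by rw [e12]; ring) (by rw [e20, abs_of_neg h2, abs_of_neg h1]; ring)
  · -- k = 2 : entry (0,1) changes
    have e12 : mutate 2 B 1 2 = -B 1 2 := by rw [mutate_app, if_pos (Or.inr rfl)]
    have e20 : mutate 2 B 2 0 = -B 2 0 := by rw [mutate_app, if_pos (Or.inl rfl)]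
    have e01 : mutate 2 B 0 1
        = B 0 1 + (|B 2 0| * (-B 1 2) + (-B 2 0) * |B 1 2|) / 2 := by
      rw [mutate_app, if_neg (by decide), hsk 2 0, hsk 1 2, abs_neg, abs_neg]
    rcases hcyc with ⟨h1, h2, h3⟩ | ⟨h1, h2, h3⟩
    · rw [abs_of_pos h1] at hp hC; rw [abs_of_pos h2] at hq hC; rw [abs_of_pos h3] at hr hC
      have key := mut_core (B 0 1) (B 2 0) (B 1 2) hp hr hq (by nlinarith [hC])
      refine good_of_entries _ hsk' (B 2 0 * B 1 2 - B 0 1) (B 1 2) (B 2 0) (-1)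
        key.1 hq hr (by nlinarith [key.2]) (Or.inr rfl)
        (by rw [e01, abs_of_pos h3, abs_of_pos h2]; ring)
        (by rw [e12]; ring) (by rw [e20]; ring)
    · rw [abs_of_neg h1] at hp hC; rw [abs_of_neg h2] at hq hC; rw [abs_of_neg h3] at hr hC
      have key := mut_core (-B 0 1) (-B 2 0) (-B 1 2) hp hr hq (by nlinarith [hC])
      refine good_of_entries _ hsk' (B 2 0 * B 1 2 + B 0 1) (-B 1 2) (-B 2 0) 1
        (by nlinarith [key.1]) hq hr (by nlinarith [key.2]) (Or.inl rfl)
        (by rw [e01, abs_of_neg h3, abs_of_neg h2]; ring)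
        (by rw [e12]; ring) (by rw [e20]; ring)

set_option maxHeartbeats 1600000 in
lemma good_perm (σ : Equiv.Perm (Fin 3)) (B : Matrix (Fin 3) (Fin 3) ℝ) (h : Good B) :
    Good (Matrix.of fun i j => B (σ i) (σ j)) := by
  obtain ⟨hsk, hcyc, hp, hq, hr, hC⟩ := h
  have hsk' : ∀ i j, (Matrix.of fun i j => B (σ i) (σ j)) j i
      = -((Matrix.of fun i j => B (σ i) (σ j)) i j) := fun i j => hsk (σ i) (σ j)
  have hne : ∀ i j : Fin 3, i ≠ j → σ i ≠ σ j := fun i j hij e => hij (σ.injective e)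
  rcases fin3cases (σ 0) with h0 | h0 | h0 <;> rcases fin3cases (σ 1) with h1 | h1 | h1

  · exact absurd (h0.trans h1.symm) (hne 0 1 (by decide))
  · have h2 : σ 2 = 2 := by
      rcases fin3cases (σ 2) with h2 | h2 | h2
      · exact absurd (h2.trans h0.symm) (hne 2 0 (by decide))
      · exact absurd (h2.trans h1.symm) (hne 2 1 (by decide))
      · exact h2
    rcases hcyc with ⟨c1, c2, c3⟩ | ⟨c1, c2, c3⟩
    · rw [abs_of_pos c1] at hp hC; rw [abs_of_pos c2] at hq hC; rw [abs_of_pos c3] at hr hC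
      exact good_of_entries _ hsk' (B 0 1) (B 1 2) (B 2 0) 1
        hp hq hr (by nlinarith [hC]) (Or.inl rfl)
        (by simp only [Matrix.of_apply]; rw [h0, h1]; ring)
        (by simp only [Matrix.of_apply]; rw [h1, h2]; ring)
        (by simp only [Matrix.of_apply]; rw [h2, h0]; ring)
    · rw [abs_of_neg c1] at hp hC; rw [abs_of_neg c2] at hq hC; rw [abs_of_neg c3] at hr hC
      exact good_of_entries _ hsk' (-B 0 1) (-B 1 2) (-B 2 0) (-1)
        hp hq hr (by nlinarith [hC]) (Or.inr rfl)
        (by simp only [Matrix.of_apply]; rw [h0, h1]; ring)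
        (by simp only [Matrix.of_apply]; rw [h1, h2]; ring)
        (by simp only [Matrix.of_apply]; rw [h2, h0]; ring)
  · have h2 : σ 2 = 1 := by
      rcases fin3cases (σ 2) with h2 | h2 | h2
      · exact absurd (h2.trans h0.symm) (hne 2 0 (by decide))
      · exact h2
      · exact absurd (h2.trans h1.symm) (hne 2 1 (by decide))
    rcases hcyc with ⟨c1, c2, c3⟩ | ⟨c1, c2, c3⟩
    · rw [abs_of_pos c1] at hp hC; rw [abs_of_pos c2] at hq hC; rw [abs_of_pos c3] at hr hC
      exact good_of_entries _ hsk' (B 2 0) (B 1 2) (B 0 1) (-1)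
        hr hq hp (by nlinarith [hC]) (Or.inr rfl)
        (by simp only [Matrix.of_apply]; rw [h0, h1, hsk 2 0]; ring)
        (by simp only [Matrix.of_apply]; rw [h1, h2, hsk 1 2]; ring)
        (by simp only [Matrix.of_apply]; rw [h2, h0, hsk 0 1]; ring)
    · rw [abs_of_neg c1] at hp hC; rw [abs_of_neg c2] at hq hC; rw [abs_of_neg c3] at hr hC
      exact good_of_entries _ hsk' (-B 2 0) (-B 1 2) (-B 0 1) 1
        hr hq hp (by nlinarith [hC]) (Or.inl rfl)
        (by simp only [Matrix.of_apply]; rw [h0, h1, hsk 2 0]; ring)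
        (by simp only [Matrix.of_apply]; rw [h1, h2, hsk 1 2]; ring)
        (by simp only [Matrix.of_apply]; rw [h2, h0, hsk 0 1]; ring)
  · have h2 : σ 2 = 2 := by
      rcases fin3cases (σ 2) with h2 | h2 | h2
      · exact absurd (h2.trans h1.symm) (hne 2 1 (by decide))
      · exact absurd (h2.trans h0.symm) (hne 2 0 (by decide))
      · exact h2
    rcases hcyc with ⟨c1, c2, c3⟩ | ⟨c1, c2, c3⟩
    · rw [abs_of_pos c1] at hp hC; rw [abs_of_pos c2] at hq hC; rw [abs_of_pos c3] at hr hC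
      exact good_of_entries _ hsk' (B 0 1) (B 2 0) (B 1 2) (-1)
        hp hr hq (by nlinarith [hC]) (Or.inr rfl)
        (by simp only [Matrix.of_apply]; rw [h0, h1, hsk 0 1]; ring)
        (by simp only [Matrix.of_apply]; rw [h1, h2, hsk 2 0]; ring)
        (by simp only [Matrix.of_apply]; rw [h2, h0, hsk 1 2]; ring)
    · rw [abs_of_neg c1] at hp hC; rw [abs_of_neg c2] at hq hC; rw [abs_of_neg c3] at hr hC
      exact good_of_entries _ hsk' (-B 0 1) (-B 2 0) (-B 1 2) 1
        hp hr hq (by nlinarith [hC]) (Or.inl rfl)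
        (by simp only [Matrix.of_apply]; rw [h0, h1, hsk 0 1]; ring)
        (by simp only [Matrix.of_apply]; rw [h1, h2, hsk 2 0]; ring)
        (by simp only [Matrix.of_apply]; rw [h2, h0, hsk 1 2]; ring)
  · exact absurd (h0.trans h1.symm) (hne 0 1 (by decide))
  · have h2 : σ 2 = 0 := by
      rcases fin3cases (σ 2) with h2 | h2 | h2
      · exact h2
      · exact absurd (h2.trans h0.symm) (hne 2 0 (by decide))
      · exact absurd (h2.trans h1.symm) (hne 2 1 (by decide))
    rcases hcyc with ⟨c1, c2, c3⟩ | ⟨c1, c2, c3⟩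
    · rw [abs_of_pos c1] at hp hC; rw [abs_of_pos c2] at hq hC; rw [abs_of_pos c3] at hr hC
      exact good_of_entries _ hsk' (B 1 2) (B 2 0) (B 0 1) 1
        hq hr hp (by nlinarith [hC]) (Or.inl rfl)
        (by simp only [Matrix.of_apply]; rw [h0, h1]; ring)
        (by simp only [Matrix.of_apply]; rw [h1, h2]; ring)
        (by simp only [Matrix.of_apply]; rw [h2, h0]; ring)
    · rw [abs_of_neg c1] at hp hC; rw [abs_of_neg c2] at hq hC; rw [abs_of_neg c3] at hr hC
      exact good_of_entries _ hsk' (-B 1 2) (-B 2 0) (-B 0 1) (-1)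
        hq hr hp (by nlinarith [hC]) (Or.inr rfl)
        (by simp only [Matrix.of_apply]; rw [h0, h1]; ring)
        (by simp only [Matrix.of_apply]; rw [h1, h2]; ring)
        (by simp only [Matrix.of_apply]; rw [h2, h0]; ring)
  · have h2 : σ 2 = 1 := by
      rcases fin3cases (σ 2) with h2 | h2 | h2
      · exact absurd (h2.trans h1.symm) (hne 2 1 (by decide))
      · exact h2
      · exact absurd (h2.trans h0.symm) (hne 2 0 (by decide))
    rcases hcyc with ⟨c1, c2, c3⟩ | ⟨c1, c2, c3⟩
    · rw [abs_of_pos c1] at hp hC; rw [abs_of_pos c2] at hq hC; rw [abs_of_pos c3] at hr hC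
      exact good_of_entries _ hsk' (B 2 0) (B 0 1) (B 1 2) 1
        hr hp hq (by nlinarith [hC]) (Or.inl rfl)
        (by simp only [Matrix.of_apply]; rw [h0, h1]; ring)
        (by simp only [Matrix.of_apply]; rw [h1, h2]; ring)
        (by simp only [Matrix.of_apply]; rw [h2, h0]; ring)
    · rw [abs_of_neg c1] at hp hC; rw [abs_of_neg c2] at hq hC; rw [abs_of_neg c3] at hr hC
      exact good_of_entries _ hsk' (-B 2 0) (-B 0 1) (-B 1 2) (-1)
        hr hp hq (by nlinarith [hC]) (Or.inr rfl)
        (by simp only [Matrix.of_apply]; rw [h0, h1]; ring)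
        (by simp only [Matrix.of_apply]; rw [h1, h2]; ring)
        (by simp only [Matrix.of_apply]; rw [h2, h0]; ring)
  · have h2 : σ 2 = 0 := by
      rcases fin3cases (σ 2) with h2 | h2 | h2
      · exact h2
      · exact absurd (h2.trans h1.symm) (hne 2 1 (by decide))
      · exact absurd (h2.trans h0.symm) (hne 2 0 (by decide))
    rcases hcyc with ⟨c1, c2, c3⟩ | ⟨c1, c2, c3⟩
    · rw [abs_of_pos c1] at hp hC; rw [abs_of_pos c2] at hq hC; rw [abs_of_pos c3] at hr hC
      exact good_of_entries _ hsk' (B 1 2) (B 0 1) (B 2 0) (-1)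
        hq hp hr (by nlinarith [hC]) (Or.inr rfl)
        (by simp only [Matrix.of_apply]; rw [h0, h1, hsk 1 2]; ring)
        (by simp only [Matrix.of_apply]; rw [h1, h2, hsk 0 1]; ring)
        (by simp only [Matrix.of_apply]; rw [h2, h0, hsk 2 0]; ring)
    · rw [abs_of_neg c1] at hp hC; rw [abs_of_neg c2] at hq hC; rw [abs_of_neg c3] at hr hC
      exact good_of_entries _ hsk' (-B 1 2) (-B 0 1) (-B 2 0) 1
        hq hp hr (by nlinarith [hC]) (Or.inl rfl)
        (by simp only [Matrix.of_apply]; rw [h0, h1, hsk 1 2]; ring)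
        (by simp only [Matrix.of_apply]; rw [h1, h2, hsk 0 1]; ring)
        (by simp only [Matrix.of_apply]; rw [h2, h0, hsk 2 0]; ring)
  · exact absurd (h0.trans h1.symm) (hne 0 1 (by decide))

lemma revCS (u w : Fin 3 → ℝ) (hu : lform u u = -2) (hw : lform w w = -2)
    (hneg : lform u w ≤ 0) : lform u w ≤ -2 := by
  simp only [lform] at hu hw hneg ⊢
  nlinarith [sq_nonneg (u 0*w 1 - u 1*w 0), sq_nonneg (u 2 - w 2), sq_nonneg (u 2 + w 2),
    sq_nonneg (u 2*w 2 - 2), sq_nonneg (u 2*w 2 + 2),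
    sq_nonneg (u 0*w 0 + u 1*w 1 - u 2*w 2 + 2),
    sq_nonneg (u 0*w 0 + u 1*w 1)]

lemma gram_det_nonpos (v : Fin 3 → Fin 3 → ℝ) :
    lform (v 0) (v 0) * lform (v 1) (v 1) * lform (v 2) (v 2)
      + 2 * (lform (v 0) (v 1) * lform (v 1) (v 2) * lform (v 2) (v 0))
      - lform (v 0) (v 0) * (lform (v 1) (v 2))^2
      - lform (v 1) (v 1) * (lform (v 2) (v 0))^2
      - lform (v 2) (v 2) * (lform (v 0) (v 1))^2 ≤ 0 := by
  simp only [lform]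
  nlinarith [sq_nonneg (v 0 0 * (v 1 1 * v 2 2 - v 1 2 * v 2 1)
    - v 0 1 * (v 1 0 * v 2 2 - v 1 2 * v 2 0)
    + v 0 2 * (v 1 0 * v 2 1 - v 1 1 * v 2 0))]

/-- a cyclic matrix admitting a realization by π-rotations is
mutation-cyclic (equivalently, a mutation-acyclic matrix admits no realization
by π-rotations). -/
theorem mutation_cyclic_of_rot_realization
    (B : Matrix (Fin 3) (Fin 3) ℝ) (hB : Bᵀ = -B) (hcyc : IsCyclicMat B)
    (h : ∃ v : Fin 3 → (Fin 3 → ℝ), RotRealization B v) :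
    IsMutationCyclic B := by
  obtain ⟨v, hv, hv01, hv12, hv20⟩ := h
  have hsk : ∀ i j, B j i = -B i j := fun i j => by
    have := congrFun (congrFun hB i) j
    simpa using this
  have hp : 2 ≤ |B 0 1| := by
    have := revCS (v 0) (v 1) (hv 0) (hv 1)
      (by rw [hv01]; exact neg_nonpos.2 (abs_nonneg _))
    rw [hv01] at this; linarith
  have hq : 2 ≤ |B 1 2| := by
    have := revCS (v 1) (v 2) (hv 1) (hv 2)
      (by rw [hv12]; exact neg_nonpos.2 (abs_nonneg _))
    rw [hv12] at this; linarith
  have hr : 2 ≤ |B 2 0| := by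
    have := revCS (v 2) (v 0) (hv 2) (hv 0)
      (by rw [hv20]; exact neg_nonpos.2 (abs_nonneg _))
    rw [hv20] at this; linarith
  have hC : |B 0 1|^2 + |B 1 2|^2 + |B 2 0|^2 ≤ |B 0 1| * |B 1 2| * |B 2 0| + 4 := by
    have hdet := gram_det_nonpos v
    rw [hv 0, hv 1, hv 2, hv01, hv12, hv20] at hdet
    nlinarith [hdet]
  have hGood : Good B := ⟨hsk, hcyc, hp, hq, hr, hC⟩
  intro B' hBB'
  have hBB2 : Relation.ReflTransGen MutationStep B B' := hBB'
  clear hBB'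
  suffices hG : Good B' from hG.2.1
  induction hBB2 with
  | refl => exact hGood
  | tail _ hstep ih =>
    rcases hstep with ⟨k, rfl⟩ | ⟨σ, rfl⟩
    · exact good_mutate k _ ih
    · exact good_perm σ _ ih
end
end

section
/- Let B be a mutation-cyclic real skew-symmetric 3×3 matrix, with weights p = |b_12|, q = |b_23|, r = |b_31|. Then C(B) = p² + q² + r² − pqr ≤ 4, and B admits a realization by π-rotations: letting ℝ^{2,1} denote ℝ³ with the Lorentzian symmetric bilinear form ⟨x,y⟩ = x_1y_1 + x_2y_2 − x_3y_3, there exist vectors v_1, v_2, v_3 ∈ ℝ^{2,1} with ⟨v_i,v_i⟩ = −2 for i = 1,2,3 and ⟨v_1,v_2⟩ = −p, ⟨v_2,v_3⟩ = −q, ⟨v_3,v_1⟩ = −r. -/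
open Matrix
noncomputable section

def Mmat (a b c : ℝ) : Matrix (Fin 3) (Fin 3) ℝ := !![0, a, -c; -a, 0, b; c, -b, 0]

example (a b c : ℝ) : Mmat a b c 0 1 = a := rfl
example (a b c : ℝ) : Mmat a b c 2 0 = c := rfl

lemma Mmat_eq (B : Matrix (Fin 3) (Fin 3) ℝ) (hB : Bᵀ = -B) :
    B = Mmat (B 0 1) (B 1 2) (B 2 0) := by
  have h : ∀ i j, B j i = -B i j := fun i j => by
    have := congrFun (congrFun hB i) j
    simpa [Matrix.transpose_apply] using this
  have hd : ∀ i, B i i = 0 := fun i => by have := h i i; linarith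
  ext i j
  fin_cases i <;> fin_cases j
  · exact hd 0
  · rfl
  · show B 0 2 = -(B 2 0); exact h 2 0
  · show B 1 0 = -(B 0 1); exact h 0 1
  · exact hd 1
  · rfl
  · rfl
  · show B 2 1 = -(B 1 2); exact h 1 2
  · exact hd 2

lemma mutate1_Mmat (a b c : ℝ) (ha : 0 < a) (hb : 0 < b) :
    mutate 1 (Mmat a b c) = Mmat (-a) (-b) (c - a*b) := by
  ext i j
  fin_cases i <;> fin_cases j <;>
    simp [mutate, Mmat, Fin.ext_iff, abs_of_pos, ha, hb] <;> ring

lemma mutate0_Mmat (a b c : ℝ) (ha : 0 < a) (hc : 0 < c) :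
    mutate 0 (Mmat a b c) = Mmat (-a) (b - a*c) (-c) := by
  ext i j
  fin_cases i <;> fin_cases j <;>
    simp [mutate, Mmat, abs_of_pos, abs_of_neg, ha, hc, neg_pos] <;> ring

lemma perm_rho (a b c : ℝ) :
    MutationStep (Mmat a b c) (Mmat b c a) := by
  right
  refine ⟨finRotate 3, ?_⟩
  ext i j
  fin_cases i <;> fin_cases j <;> simp [Mmat, finRotate_succ_apply] <;> rfl

lemma perm_swap (a b c : ℝ) :
    MutationStep (Mmat a b c) (Mmat (-a) (-c) (-b)) := by
  right
  refine ⟨Equiv.swap 0 1, ?_⟩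
  ext i j
  fin_cases i <;> fin_cases j <;>
    simp [Mmat, Equiv.swap_apply_def] <;> rfl

lemma me_rho (a b c : ℝ) : MutationEquiv (Mmat a b c) (Mmat b c a) :=
  Relation.ReflTransGen.single (perm_rho a b c)

lemma me_rho2 (a b c : ℝ) : MutationEquiv (Mmat a b c) (Mmat c a b) :=
  (me_rho a b c).trans (me_rho b c a)

lemma me_swap (a b c : ℝ) : MutationEquiv (Mmat a b c) (Mmat (-a) (-c) (-b)) :=
  Relation.ReflTransGen.single (perm_swap a b c)

lemma me_T (a b c : ℝ) (ha : 0 < a) (hb : 0 < b) :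
    MutationEquiv (Mmat a b c) (Mmat a (a*b - c) b) := by
  have h1 : MutationStep (Mmat a b c) (Mmat (-a) (-b) (c - a*b)) :=
    Or.inl ⟨1, (mutate1_Mmat a b c ha hb).symm⟩
  have h2 := me_swap (-a) (-b) (c - a*b)
  simpa [MutationEquiv] using (Relation.ReflTransGen.single h1).trans h2

lemma me_U (a b c : ℝ) (ha : 0 < a) (hc : 0 < c) :
    MutationEquiv (Mmat a b c) (Mmat a c (a*c - b)) := by
  have h1 : MutationStep (Mmat a b c) (Mmat (-a) (b - a*c) (-c)) :=
    Or.inl ⟨0, (mutate0_Mmat a b c ha hc).symm⟩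
  have h2 := me_swap (-a) (b - a*c) (-c)
  simpa [MutationEquiv] using (Relation.ReflTransGen.single h1).trans h2

lemma not_cyclic_T (a b c : ℝ) (ha : 0 < a) (hb : 0 < b) (h : a*b ≤ c) :
    IsMutationAcyclic (Mmat a b c) := by
  refine ⟨Mmat (-a) (-b) (c - a*b),
    Relation.ReflTransGen.single (Or.inl ⟨1, (mutate1_Mmat a b c ha hb).symm⟩), ?_⟩
  rintro (⟨h1, -, -⟩ | ⟨-, -, h3⟩)
  · simp only [Mmat] at h1
    norm_num at h1
    linarith
  · simp only [Mmat] at h3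
    norm_num at h3
    simp at h3
    linarith

lemma not_cyclic_U (a b c : ℝ) (ha : 0 < a) (hc : 0 < c) (h : a*c ≤ b) :
    IsMutationAcyclic (Mmat a b c) := by
  refine ⟨Mmat (-a) (b - a*c) (-c),
    Relation.ReflTransGen.single (Or.inl ⟨0, (mutate0_Mmat a b c ha hc).symm⟩), ?_⟩
  rintro (⟨h1, -, -⟩ | ⟨-, h2, -⟩)
  · simp only [Mmat] at h1
    norm_num at h1
    linarith
  · simp only [Mmat] at h2
    norm_num at h2
    simp at h2
    linarith

lemma acyclic_of_equiv {B B' : Matrix (Fin 3) (Fin 3) ℝ}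
    (h : MutationEquiv B B') (h2 : IsMutationAcyclic B') : IsMutationAcyclic B := by
  obtain ⟨B'', e, hn⟩ := h2
  exact ⟨B'', h.trans e, hn⟩

lemma not_cyclic_and_acyclic {B : Matrix (Fin 3) (Fin 3) ℝ}
    (h : IsMutationCyclic B) (h2 : IsMutationAcyclic B) : False := by
  obtain ⟨B', e, hn⟩ := h2
  exact hn (h B' e)

lemma descent1 : ∀ (n : ℕ) (g a b c : ℝ), 0 < g → 0 < a → a ≤ b → a ≤ c →
    a + g ≤ 2 → b + c ≤ 2 + n * g → IsMutationAcyclic (Mmat a b c) := by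
  intro n
  induction n with
  | zero =>
    intro g a b c hg ha hab hac hag hm
    rcases le_total b c with hbc | hbc
    · -- mutate pair (a,b), replacing c
      rcases le_or_gt (a*b) c with hle | hlt
      · exact not_cyclic_T a b c ha (ha.trans_le hab) hle
      · exfalso
        -- c' = a*b - c > 0 and measure ≤ 2 gives contradiction
        norm_num at hm
        nlinarith
    · rcases le_or_gt (a*c) b with hle | hlt
      · exact not_cyclic_U a b c ha (ha.trans_le hac) hle
      · exfalso; norm_num at hm; nlinarith
  | succ m ih =>
    intro g a b c hg ha hab hac hag hm
    have hm' : b + c ≤ 2 + m * g + g := by push_cast at hm; linarith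
    rcases le_total b c with hbc | hbc
    · -- mutate pair (a,b) replacing c (the max); c' = a*b - c
      rcases le_or_gt (a*b) c with hle | hlt
      · exact not_cyclic_T a b c ha (ha.trans_le hab) hle
      set c' := a*b - c with hc'
      have hc'pos : 0 < c' := by simp [hc']; linarith
      have hb1 : 1 ≤ b := by nlinarith
      have hgap : c' ≤ b - g := by nlinarith
      have hreach : MutationEquiv (Mmat a b c) (Mmat a c' b) :=
        me_T a b c ha (ha.trans_le hab)
      rcases le_total a c' with hac' | hc'a
      · -- recurse on (a, c', b)
        refine acyclic_of_equiv hreach (ih g a c' b hg ha hac' hab hag ?_)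
        push_cast
        linarith [hm']
      · -- c' < a : mutate pair (a, c') replacing b; c'' = a*c' - b
        rcases le_or_gt (a*c') b with hle2 | hlt2
        · exact acyclic_of_equiv hreach (not_cyclic_T a c' b ha hc'pos hle2)
        set c'' := a*c' - b with hc''
        have hc''pos : 0 < c'' := by simp [hc'']; linarith
        have hc''c' : c'' ≤ c' := by nlinarith
        have hreach2 : MutationEquiv (Mmat a c' b) (Mmat c'' c' a) := by
          have e1 := me_T a c' b ha hc'pos
          exact e1.trans (me_rho a (a*c' - b) c')
        refine acyclic_of_equiv (hreach.trans hreach2)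
          (ih g c'' c' a hg hc''pos hc''c' (hc''c'.trans hc'a) (by linarith) ?_)
        push_cast
        linarith [hm']
    · -- mutate pair (a,c) replacing b (the max); b' = a*c - b
      rcases le_or_gt (a*c) b with hle | hlt
      · exact not_cyclic_U a b c ha (ha.trans_le hac) hle
      set b' := a*c - b with hb'
      have hb'pos : 0 < b' := by simp [hb']; linarith
      have hc1 : 1 ≤ c := by nlinarith
      have hgap : b' ≤ c - g := by nlinarith
      have hreach : MutationEquiv (Mmat a b c) (Mmat a c b') :=
        me_U a b c ha (ha.trans_le hac)
      rcases le_total a b' with hab' | hb'a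
      · refine acyclic_of_equiv hreach (ih g a c b' hg ha hac hab' hag ?_)
        push_cast
        linarith [hm']
      · -- b' < a : mutate pair (a, b') replacing c; c'' = a*b' - c
        rcases le_or_gt (a*b') c with hle2 | hlt2
        · exact acyclic_of_equiv hreach (not_cyclic_U a c b' ha hb'pos hle2)
        set c'' := a*b' - c with hc''
        have hc''pos : 0 < c'' := by simp [hc'']; linarith
        have hc''b' : c'' ≤ b' := by nlinarith
        have hreach2 : MutationEquiv (Mmat a c b') (Mmat c'' a b') := by
          have e1 := me_U a c b' ha hb'pos
          exact e1.trans (me_rho2 a b' (a*b' - c))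
        refine acyclic_of_equiv (hreach.trans hreach2)
          (ih g c'' a b' hg hc''pos (hc''b'.trans hb'a) hc''b' (by linarith) ?_)
        push_cast
        linarith [hm']

lemma descent1_apply (a b c : ℝ) (ha : 0 < a) (hab : a ≤ b) (hac : a ≤ c)
    (ha2 : a < 2) : IsMutationAcyclic (Mmat a b c) := by
  obtain ⟨n, hn⟩ := exists_nat_ge ((b + c - 2) / (2 - a))
  have hg : 0 < 2 - a := by linarith
  have : b + c - 2 ≤ n * (2 - a) := by
    rw [div_le_iff₀ hg] at hn
    linarith
  exact descent1 n (2 - a) a b c hg ha hab hac (by linarith) (by linarith)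

set_option maxHeartbeats 2000000 in
lemma descent2 : ∀ (n : ℕ) (d a b c : ℝ), 0 < d → 2 ≤ a → 2 ≤ b → a ≤ c → b ≤ c →
    a^2 + b^2 + c^2 - a*b*c = 4 + d → a + b + c ≤ 6 + n * (2*Real.sqrt d) →
    IsMutationAcyclic (Mmat a b c) := by
  intro n
  induction n with
  | zero =>
    intro d a b c hd ha hb hac hbc heq hm
    exfalso
    norm_num at hm
    have h1 : a = 2 := by linarith
    have h2 : b = 2 := by linarith
    have h3 : c = 2 := by linarith
    rw [h1, h2, h3] at heq
    norm_num at heq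
    linarith
  | succ m ih =>
    intro d a b c hd ha hb hac hbc heq hm
    have hm' : a + b + c ≤ 6 + m * (2*Real.sqrt d) + 2*Real.sqrt d := by
      push_cast at hm; linarith
    have ha0 : (0:ℝ) < a := by linarith
    have hb0 : (0:ℝ) < b := by linarith
    have hc2 : (2:ℝ) ≤ c := hac.trans' ha
    set c' := a*b - c with hc'def
    -- c' < c
    have habc : a * b < 2 * c := by
      by_contra hcon
      push_neg at hcon
      rcases le_total a b with h' | h'
      · nlinarith
      · nlinarith
    -- gap
    have hsq : (c - c')^2 = (a^2-4)*(b^2-4) + 4*d := by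
      simp only [hc'def]; nlinarith [heq]
    have hgap : 2 * Real.sqrt d ≤ c - c' := by
      have h4d : 4 * d ≤ (c - c')^2 := by
        nlinarith [mul_nonneg (show (0:ℝ) ≤ a^2-4 by nlinarith) (show (0:ℝ) ≤ b^2-4 by nlinarith)]
      have hcc' : 0 < c - c' := by simp only [hc'def]; linarith
      have := Real.sqrt_le_sqrt h4d
      rw [show (4:ℝ)*d = (2*Real.sqrt d)^2 by
            rw [mul_pow, Real.sq_sqrt hd.le]; ring] at this
      rwa [Real.sqrt_sq (by positivity), Real.sqrt_sq hcc'.le] at this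
    have hreach : MutationEquiv (Mmat a b c) (Mmat a c' b) := me_T a b c ha0 hb0
    rcases le_or_gt c' 0 with hc'le | hc'pos
    · exact not_cyclic_T a b c ha0 hb0 (by linarith)
    rcases lt_or_ge c' 2 with hc'lt | hc'ge
    · -- min < 2 : go to descent1 via rotation (c', b, a)
      refine acyclic_of_equiv (hreach.trans (me_rho a c' b)) ?_
      exact descent1_apply c' b a hc'pos (by linarith) (by linarith) hc'lt
    · -- all ≥ 2 : recurse
      have heq' : a^2 + c'^2 + b^2 - a*c'*b = 4 + d := by
        simp only [hc'def]; nlinarith [heq]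
      rcases le_total a b with hab | hba
      · -- max of (a,b) is b; show c' ≤ b, recurse on (a, c', b)
        have hc'b : c' ≤ b := by
          by_contra hcon
          push_neg at hcon
          have f_b : b^2 - a*b*b + a^2 + b^2 - 4 ≤ 0 := by
            nlinarith [mul_nonneg (sub_nonneg.2 ha) (show (0:ℝ) ≤ b^2 - (a+2) by nlinarith)]
          have f_c : c'^2 - a*b*c' + a^2 + b^2 - 4 = d := by linear_combination heq'
          nlinarith [mul_nonneg (sub_pos.2 hcon).le (sub_nonneg.2 hbc)]
        refine acyclic_of_equiv hreach (ih d a c' b hd ha hc'ge hab hc'b ?_ ?_)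
        · linarith [heq']
        · linarith
      · -- max of (a,b) is a; show c' ≤ a, rotate to (c', b, a)
        have hc'a : c' ≤ a := by
          by_contra hcon
          push_neg at hcon
          have f_a : a^2 - a*b*a + a^2 + b^2 - 4 ≤ 0 := by
            nlinarith [mul_nonneg (sub_nonneg.2 hb) (show (0:ℝ) ≤ a^2 - (b+2) by nlinarith)]
          have f_c : c'^2 - a*b*c' + a^2 + b^2 - 4 = d := by linear_combination heq'
          nlinarith [mul_nonneg (sub_pos.2 hcon).le (sub_nonneg.2 hac)]
        refine acyclic_of_equiv (hreach.trans (me_rho a c' b)) 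
          (ih d c' b a hd hc'ge hb hc'a hba ?_ ?_)
        · linarith [heq']
        · linarith

lemma mc_equiv {B B' : Matrix (Fin 3) (Fin 3) ℝ} (e : MutationEquiv B B')
    (h : IsMutationCyclic B) : IsMutationCyclic B' :=
  fun B'' e2 => h B'' (e.trans e2)

lemma main_pos (a b c : ℝ) (ha : 0 < a) (hb : 0 < b) (hc : 0 < c)
    (h : IsMutationCyclic (Mmat a b c)) :
    2 ≤ a ∧ 2 ≤ b ∧ 2 ≤ c ∧ a^2 + b^2 + c^2 - a*b*c ≤ 4 := by
  have hR1 : IsMutationCyclic (Mmat b c a) := mc_equiv (me_rho a b c) h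
  have hR2 : IsMutationCyclic (Mmat c a b) := mc_equiv (me_rho2 a b c) h
  have key_min : ∀ x y z : ℝ, 0 < x → x ≤ y → x ≤ z →
      IsMutationCyclic (Mmat x y z) → 2 ≤ x := by
    intro x y z hx hxy hxz hmc
    by_contra hcon
    push_neg at hcon
    exact not_cyclic_and_acyclic hmc (descent1_apply x y z hx hxy hxz hcon)
  have k1 : a ≤ b → a ≤ c → 2 ≤ a := fun h1 h2 => key_min a b c ha h1 h2 h
  have k2 : b ≤ c → b ≤ a → 2 ≤ b := fun h1 h2 => key_min b c a hb h1 h2 hR1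
  have k3 : c ≤ a → c ≤ b → 2 ≤ c := fun h1 h2 => key_min c a b hc h1 h2 hR2
  have hmin : 2 ≤ a ∧ 2 ≤ b ∧ 2 ≤ c := by
    rcases le_total a b with h1 | h1 <;> rcases le_total b c with h2 | h2 <;>
      rcases le_total a c with h3 | h3 <;>
      refine ⟨?_, ?_, ?_⟩ <;>
      first
        | linarith [k1 (by linarith) (by linarith)]
        | linarith [k2 (by linarith) (by linarith)]
        | linarith [k3 (by linarith) (by linarith)]
  obtain ⟨h2a, h2b, h2c⟩ := hmin
  refine ⟨h2a, h2b, h2c, ?_⟩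
  by_contra hcon
  push_neg at hcon
  set d := a^2 + b^2 + c^2 - a*b*c - 4 with hd_def
  have hd : 0 < d := by simp only [hd_def]; linarith
  have hsd : 0 < 2 * Real.sqrt d := by positivity
  have key_max : ∀ x y z : ℝ, 2 ≤ x → 2 ≤ y → x ≤ z → y ≤ z →
      x^2 + y^2 + z^2 - x*y*z = 4 + d → IsMutationCyclic (Mmat x y z) → False := by
    intro x y z hx hy hxz hyz heq hmc
    obtain ⟨n, hn⟩ := exists_nat_ge ((x + y + z - 6) / (2 * Real.sqrt d))
    rw [div_le_iff₀ hsd] at hn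
    exact not_cyclic_and_acyclic hmc
      (descent2 n d x y z hd hx hy hxz hyz heq (by linarith))
  rcases le_total a b with h1 | h1 <;> rcases le_total b c with h2 | h2 <;>
    rcases le_total a c with h3 | h3
  · exact key_max a b c h2a h2b (by linarith) (by linarith) (by linear_combination hd_def) h
  · exact key_max a b c h2a h2b (by linarith) (by linarith) (by linear_combination hd_def) h
  · exact key_max c a b h2c h2a (by linarith) (by linarith) (by linear_combination hd_def) hR2
  · exact key_max c a b h2c h2a (by linarith) (by linarith) (by linear_combination hd_def) hR2
  · exact key_max a b c h2a h2b (by linarith) (by linarith) (by linear_combination hd_def) h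
  · exact key_max b c a h2b h2c (by linarith) (by linarith) (by linear_combination hd_def) hR1
  · exact key_max b c a h2b h2c (by linarith) (by linarith) (by linear_combination hd_def) hR1
  · exact key_max b c a h2b h2c (by linarith) (by linarith) (by linear_combination hd_def) hR1

lemma lform_mk (a0 a1 a2 b0 b1 b2 : ℝ) :
    lform ![a0,a1,a2] ![b0,b1,b2] = a0*b0 + a1*b1 - a2*b2 := by
  simp [lform]

set_option maxHeartbeats 1600000 in
lemma rot_exists (p q r : ℝ) (hp : 2 ≤ p) (hq : 2 ≤ q) (hr : 2 ≤ r)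
    (hC : p^2 + q^2 + r^2 - p*q*r ≤ 4) :
    ∃ v : Fin 3 → Fin 3 → ℝ, (∀ i, lform (v i) (v i) = -2) ∧
      lform (v 0) (v 1) = -p ∧ lform (v 1) (v 2) = -q ∧ lform (v 2) (v 0) = -r := by
  have ht2 : Real.sqrt 2 ^ 2 = 2 := Real.sq_sqrt (by norm_num)
  have ht0 : 0 < Real.sqrt 2 := Real.sqrt_pos.2 (by norm_num)
  set t := Real.sqrt 2 with ht_def
  have hs2 : Real.sqrt (p^2 - 4) ^ 2 = p^2 - 4 := Real.sq_sqrt (by nlinarith)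
  have hs0 : 0 ≤ Real.sqrt (p^2 - 4) := Real.sqrt_nonneg _
  set s := Real.sqrt (p^2 - 4) with hs_def
  set x := (p*r - 2*q) / (t*s) with hx_def
  have hsx : s * x = (p*r - 2*q) / t := by
    rcases eq_or_lt_of_le hs0 with hs_eq | hs_pos
    · have hp2 : p = 2 := by nlinarith [hs2]
      have hqr : q = r := by nlinarith [sq_nonneg (q - r)]
      have hnum : p*r - 2*q = 0 := by rw [hp2, hqr]; ring
      rw [hx_def, hnum]
      simp
    · rw [hx_def]
      field_simp
  have hx2 : x^2 ≤ (r^2 - 4)/2 := by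
    rcases eq_or_lt_of_le hs0 with hs_eq | hs_pos
    · have hp2 : p = 2 := by nlinarith [hs2]
      have hqr : q = r := by nlinarith [sq_nonneg (q - r)]
      have hnum : p*r - 2*q = 0 := by rw [hp2, hqr]; ring
      have hx0 : x = 0 := by rw [hx_def, hnum]; simp
      rw [hx0]
      nlinarith
    · have hden : 0 < (t*s)^2 := by positivity
      have hx2eq : x^2 = (p*r - 2*q)^2 / ((t*s)^2) := by rw [hx_def, div_pow]
      rw [hx2eq, div_le_iff₀ hden]
      have h2s : (t*s)^2 = 2*(p^2-4) := by rw [mul_pow, ht2, hs2]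
      rw [h2s]
      nlinarith
  have hw2 : Real.sqrt ((r^2 - 4)/2 - x^2) ^ 2 = (r^2 - 4)/2 - x^2 :=
    Real.sq_sqrt (by linarith)
  set w := Real.sqrt ((r^2 - 4)/2 - x^2) with hw_def
  have htne : t ≠ 0 := ne_of_gt ht0
  refine ⟨![![0, 0, t], ![s/t, 0, p/t], ![x, w, r/t]], ?_, ?_, ?_, ?_⟩
  · intro i
    fin_cases i
    · show lform ![0,0,t] ![0,0,t] = -2
      rw [lform_mk]
      nlinarith
    · show lform ![s/t, 0, p/t] ![s/t, 0, p/t] = -2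
      rw [lform_mk]
      field_simp
      nlinarith
    · show lform ![x, w, r/t] ![x, w, r/t] = -2
      rw [lform_mk]
      field_simp
      nlinarith
  · show lform ![0,0,t] ![s/t, 0, p/t] = -p
    rw [lform_mk]
    field_simp
    ring
  · show lform ![s/t, 0, p/t] ![x, w, r/t] = -q
    rw [lform_mk]
    have key : s/t * x = (p*r - 2*q)/2 := by
      rw [div_mul_eq_mul_div, hsx, div_div, ← sq, ht2]
    rw [key]
    field_simp
    nlinarith
  · show lform ![x, w, r/t] ![0,0,t] = -r
    rw [lform_mk]
    field_simp
    ring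

/-- a mutation-cyclic matrix has Markov constant at most 4 and
admits a realization by π-rotations. -/
theorem mutation_cyclic_markov_le_four_and_rot_realization
    (B : Matrix (Fin 3) (Fin 3) ℝ) (hB : Bᵀ = -B) (h : IsMutationCyclic B) :
    |B 0 1| ^ 2 + |B 1 2| ^ 2 + |B 2 0| ^ 2 - |B 0 1| * |B 1 2| * |B 2 0| ≤ 4 ∧
    ∃ v : Fin 3 → (Fin 3 → ℝ), RotRealization B v := by
  have hBeq := Mmat_eq B hB
  have hM : IsMutationCyclic (Mmat (B 0 1) (B 1 2) (B 2 0)) := hBeq ▸ h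
  have hcyc : IsCyclicMat B := h B Relation.ReflTransGen.refl
  have hkey : 2 ≤ |B 0 1| ∧ 2 ≤ |B 1 2| ∧ 2 ≤ |B 2 0| ∧
      |B 0 1|^2 + |B 1 2|^2 + |B 2 0|^2 - |B 0 1| * |B 1 2| * |B 2 0| ≤ 4 := by
    rcases hcyc with ⟨h1, h2, h3⟩ | ⟨h1, h2, h3⟩
    · obtain ⟨k1, k2, k3, k4⟩ := main_pos (B 0 1) (B 1 2) (B 2 0) h1 h2 h3 hM
      rw [abs_of_pos h1, abs_of_pos h2, abs_of_pos h3]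
      exact ⟨k1, k2, k3, k4⟩
    · have hM2 : IsMutationCyclic (Mmat (-(B 0 1)) (-(B 2 0)) (-(B 1 2))) :=
        mc_equiv (me_swap (B 0 1) (B 1 2) (B 2 0)) hM
      obtain ⟨k1, k2, k3, k4⟩ := main_pos (-(B 0 1)) (-(B 2 0)) (-(B 1 2))
        (by linarith) (by linarith) (by linarith) hM2
      rw [abs_of_neg h1, abs_of_neg h2, abs_of_neg h3]
      exact ⟨k1, k3, k2, by nlinarith [k4]⟩
  obtain ⟨k1, k2, k3, k4⟩ := hkey
  refine ⟨k4, ?_⟩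
  obtain ⟨v, n1, n2, n3, n4⟩ := rot_exists (|B 0 1|) (|B 1 2|) (|B 2 0|) k1 k2 k3 k4
  exact ⟨v, n1, n2, n3, n4⟩
end
end

section
/- Let p, q, r be real numbers with 2 ≤ p ≤ q ≤ r, and let a, b, c ≥ 0 be the real numbers with cosh a = p/2, cosh b = q/2, cosh c = r/2. Set Δ = a + b − c and C = p² + q² + r² − pqr. Then: Δ > 0 if and only if C < 4; Δ = 0 if and only if C = 4; and Δ < 0 if and only if C > 4. -/
private lemma aux_sign (X F C : ℝ) (hF : 0 < F) (h : C - 4 = X * F) :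
    (0 < X ↔ 4 < C) ∧ (X = 0 ↔ C = 4) ∧ (X < 0 ↔ C < 4) := by
  refine ⟨⟨fun hX => by nlinarith [mul_pos hX hF], fun hC => ?_⟩,
    ⟨fun hX => by rw [hX, zero_mul] at h; linarith, fun hC => ?_⟩,
    ⟨fun hX => by nlinarith [mul_pos (neg_pos.mpr hX) hF], fun hC => ?_⟩⟩
  · by_contra hX; push_neg at hX
    nlinarith [mul_nonneg (neg_nonneg.mpr hX) hF.le]
  · have : X * F = 0 := by linarith
    rcases mul_eq_zero.mp this with h' | h'
    · exact h'
    · exact absurd h' (ne_of_gt hF)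
  · by_contra hX; push_neg at hX
    nlinarith [mul_nonneg hX hF.le]

/-- the triangle-inequality defect `Δ = a + b - c` of the hyperbolic
distances `a, b, c` with `2cosh a = p`, `2cosh b = q`, `2cosh c = r` has the same
sign as `4 - C`, where `C = p² + q² + r² - pqr`. -/
theorem triangle_defect_sign_iff_markov (p q r a b c : ℝ)
    (hp : 2 ≤ p) (hpq : p ≤ q) (hqr : q ≤ r)
    (ha : 0 ≤ a) (hb : 0 ≤ b) (hc : 0 ≤ c)
    (hca : Real.cosh a = p / 2) (hcb : Real.cosh b = q / 2)
    (hcc : Real.cosh c = r / 2) :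
    (0 < a + b - c ↔ p ^ 2 + q ^ 2 + r ^ 2 - p * q * r < 4) ∧
    (a + b - c = 0 ↔ p ^ 2 + q ^ 2 + r ^ 2 - p * q * r = 4) ∧
    (a + b - c < 0 ↔ 4 < p ^ 2 + q ^ 2 + r ^ 2 - p * q * r) := by
  have hab : a ≤ b := by
    have h1 : Real.cosh a ≤ Real.cosh b := by rw [hca, hcb]; linarith
    have h2 := Real.cosh_le_cosh.mp h1
    rwa [abs_of_nonneg ha, abs_of_nonneg hb] at h2
  have hbc : b ≤ c := by
    have h1 : Real.cosh b ≤ Real.cosh c := by rw [hcb, hcc]; linarith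
    have h2 := Real.cosh_le_cosh.mp h1
    rwa [abs_of_nonneg hb, abs_of_nonneg hc] at h2
  have hsq : Real.sinh a ^ 2 = Real.cosh a ^ 2 - 1 := by
    nlinarith [Real.cosh_sq_sub_sinh_sq a]
  have hsq' : Real.sinh b ^ 2 = Real.cosh b ^ 2 - 1 := by
    nlinarith [Real.cosh_sq_sub_sinh_sq b]
  have key : p ^ 2 + q ^ 2 + r ^ 2 - p * q * r - 4
      = (r - 2 * Real.cosh (a + b)) * (r - 2 * Real.cosh (b - a)) := by
    rw [Real.cosh_add, Real.cosh_sub]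
    have hpa : p = 2 * Real.cosh a := by rw [hca]; ring
    have hqb : q = 2 * Real.cosh b := by rw [hcb]; ring
    rw [hpa, hqb]; nlinarith [hsq, hsq']
  have hF : 0 ≤ r - 2 * Real.cosh (b - a) := by
    have h1 : Real.cosh (b - a) ≤ Real.cosh b := by
      have habs : |b - a| ≤ |b| := by
        rw [abs_of_nonneg (by linarith : (0:ℝ) ≤ b - a), abs_of_nonneg hb]; linarith
      exact Real.cosh_le_cosh.mpr habs
    rw [hcb] at h1; linarith
  have hlt : c < a + b ↔ Real.cosh c < Real.cosh (a + b) := by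
    rw [Real.cosh_lt_cosh, abs_of_nonneg hc, abs_of_nonneg (by linarith : (0:ℝ) ≤ a + b)]
  have hgt : a + b < c ↔ Real.cosh (a + b) < Real.cosh c := by
    rw [Real.cosh_lt_cosh, abs_of_nonneg hc, abs_of_nonneg (by linarith : (0:ℝ) ≤ a + b)]
  have heq : a + b = c ↔ Real.cosh (a + b) = Real.cosh c := by
    constructor
    · intro h; rw [h]
    · intro h
      exact Real.cosh_strictMonoOn.injOn (Set.mem_Ici.mpr (by linarith))
        (Set.mem_Ici.mpr hc) h
  rcases eq_or_lt_of_le hF with hF0 | hFpos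
  · -- degenerate case: F = 0 forces a = 0, c = b, and C = 4
    have hC4 : p ^ 2 + q ^ 2 + r ^ 2 - p * q * r - 4 = 0 := by
      rw [key, ← hF0, mul_zero]
    have hcb' : Real.cosh (b - a) = Real.cosh c := by rw [hcc]; linarith
    have h1 : Real.cosh (b - a) ≤ Real.cosh b := by
      have habs : |b - a| ≤ |b| := by
        rw [abs_of_nonneg (by linarith : (0:ℝ) ≤ b - a), abs_of_nonneg hb]; linarith
      exact Real.cosh_le_cosh.mpr habs
    have h2 : Real.cosh b ≤ Real.cosh c := by rw [hcb, hcc]; linarith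
    have h3 : Real.cosh (b - a) = Real.cosh b := le_antisymm h1 (by rw [hcb']; linarith [hcb' ▸ h2])
    have ha0 : b - a = b :=
      Real.cosh_strictMonoOn.injOn (Set.mem_Ici.mpr (by linarith))
        (Set.mem_Ici.mpr hb) h3
    have ha0' : a = 0 := by linarith
    have hcbeq : Real.cosh c = Real.cosh b := by
      rw [← hcb', h3]
    have hcb2 : c = b :=
      Real.cosh_strictMonoOn.injOn (Set.mem_Ici.mpr hc) (Set.mem_Ici.mpr hb) hcbeq
    have hd : a + b - c = 0 := by rw [ha0', hcb2]; ring
    refine ⟨⟨fun h => absurd h (by rw [hd]; exact lt_irrefl 0),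
        fun h => absurd h (by linarith)⟩,
      ⟨fun _ => by linarith, fun _ => hd⟩,
      ⟨fun h => absurd h (by rw [hd]; exact lt_irrefl 0),
        fun h => absurd h (by linarith)⟩⟩
  · obtain ⟨i1, i2, i3⟩ := aux_sign (r - 2 * Real.cosh (a + b))
      (r - 2 * Real.cosh (b - a)) (p ^ 2 + q ^ 2 + r ^ 2 - p * q * r) hFpos key
    have hX : r - 2 * Real.cosh (a + b) = 2 * Real.cosh c - 2 * Real.cosh (a + b) := by
      rw [hcc]; ring
    refine ⟨?_, ?_, ?_⟩
    · rw [show (0 < a + b - c ↔ c < a + b) from ⟨fun h => by linarith, fun h => by linarith⟩,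
        hlt, ← i3]
      constructor <;> intro h <;> [linarith [hX]; linarith [hX]]
    · rw [show (a + b - c = 0 ↔ a + b = c) from ⟨fun h => by linarith, fun h => by linarith⟩,
        heq, ← i2]
      constructor <;> intro h <;> [skip; skip]
      · rw [hX]; linarith
      · rw [hX] at h; linarith
    · rw [show (a + b - c < 0 ↔ a + b < c) from ⟨fun h => by linarith, fun h => by linarith⟩,
        hgt, ← i1]
      constructor <;> intro h <;> [linarith [hX]; linarith [hX]]
end

section
/- Let p, q, r ≥ 0 be real numbers, let M be the symmetric 3×3 matrix with diagonal entries 2 and off-diagonal entries m_12 = m_21 = −p, m_13 = m_31 = −q, m_23 = m_32 = −r, and set C = p² + q² + r² + pqr (the Markov constant of an acyclic rank-3 quiver with weights p, q, r). Then det M = −2(C − 4); moreover M is positive definite if and only if C < 4, and M is positive semidefinite if and only if C ≤ 4. -/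
open Matrix

lemma psd_det_nonneg {n : Type*} [Fintype n] [DecidableEq n] {M : Matrix n n ℝ}
    (h : M.PosSemidef) : 0 ≤ M.det := by
  rw [h.isHermitian.det_eq_prod_eigenvalues]
  exact Finset.prod_nonneg fun i _ => h.eigenvalues_nonneg i

/-- the Gram matrix of an acyclic rank 3 quiver with weights
`p, q, r ≥ 0` has determinant `-2(C - 4)` where `C = p² + q² + r² + pqr`, and it
is positive (semi)definite iff `C < 4` (resp. `C ≤ 4`). -/
theorem gram_det_and_definiteness (p q r : ℝ) (hp : 0 ≤ p) (hq : 0 ≤ q) (hr : 0 ≤ r) :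
    (!![(2 : ℝ), -p, -q; -p, 2, -r; -q, -r, 2]).det
      = -2 * ((p ^ 2 + q ^ 2 + r ^ 2 + p * q * r) - 4) ∧
    ((!![(2 : ℝ), -p, -q; -p, 2, -r; -q, -r, 2]).PosDef ↔
      p ^ 2 + q ^ 2 + r ^ 2 + p * q * r < 4) ∧
    ((!![(2 : ℝ), -p, -q; -p, 2, -r; -q, -r, 2]).PosSemidef ↔
      p ^ 2 + q ^ 2 + r ^ 2 + p * q * r ≤ 4) := by
  set M := !![(2 : ℝ), -p, -q; -p, 2, -r; -q, -r, 2] with hM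
  have hdet : M.det = -2 * ((p ^ 2 + q ^ 2 + r ^ 2 + p * q * r) - 4) := by
    simp [hM, Matrix.det_fin_three]; ring
  have hherm : M.IsHermitian := by
    rw [Matrix.IsHermitian]
    ext i j
    fin_cases i <;> fin_cases j <;> simp [hM]
  have hquad : ∀ x : Fin 3 → ℝ, dotProduct (star x) (M *ᵥ x) =
      2 * x 0 ^ 2 + 2 * x 1 ^ 2 + 2 * x 2 ^ 2
        - 2 * p * x 0 * x 1 - 2 * q * x 0 * x 2 - 2 * r * x 1 * x 2 := by
    intro x
    simp [hM, dotProduct, Matrix.mulVec, Fin.sum_univ_three]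
    ring
  refine ⟨hdet, ?_, ?_⟩
  · constructor
    · intro h
      have := h.det_pos
      rw [hdet] at this
      linarith
    · intro hC
      have hrest : 0 ≤ q ^ 2 + r ^ 2 + p * q * r := by positivity
      have h4p : 0 < 4 - p ^ 2 := by nlinarith
      refine Matrix.posDef_iff_dotProduct_mulVec.mpr ⟨hherm, fun x hx => ?_⟩
      rw [hquad]
      by_cases h2 : x 2 = 0
      · by_cases h1 : x 1 = 0
        · have h0 : x 0 ≠ 0 := by
            intro h0
            apply hx
            ext i; fin_cases i <;> assumption
          have := sq_pos_of_ne_zero h0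
          rw [h2, h1]
          nlinarith
        · have hb2 : 0 < x 1 ^ 2 := sq_pos_of_ne_zero h1
          rw [h2]
          nlinarith [sq_nonneg (2 * x 0 - p * x 1), mul_pos h4p hb2]
      · have hc2 : 0 < x 2 ^ 2 := sq_pos_of_ne_zero h2
        nlinarith [sq_nonneg (2 * x 0 - p * x 1 - q * x 2),
          sq_nonneg ((4 - p ^ 2) * x 1 - (2 * r + p * q) * x 2),
          mul_pos (by linarith : (0:ℝ) < 4 - (p ^ 2 + q ^ 2 + r ^ 2 + p * q * r)) hc2]
  · constructor
    · intro h
      have := psd_det_nonneg h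
      rw [hdet] at this
      linarith
    · intro hC
      have hrest : 0 ≤ q ^ 2 + r ^ 2 + p * q * r := by positivity
      have h4p : 0 ≤ 4 - p ^ 2 := by nlinarith
      refine Matrix.posSemidef_iff_dotProduct_mulVec.mpr ⟨hherm, fun x => ?_⟩
      rw [hquad]
      rcases eq_or_lt_of_le h4p with hEq | hLt
      · -- p ^ 2 = 4, so p = 2 and q = r = 0
        have hp4 : p ^ 2 = 4 := by linarith
        have hq2 : q ^ 2 = 0 := le_antisymm (by nlinarith [mul_nonneg (mul_nonneg hp hq) hr]) (sq_nonneg q)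
        have hq0 : q = 0 := pow_eq_zero_iff two_ne_zero |>.mp hq2
        have hr2 : r ^ 2 = 0 := le_antisymm (by nlinarith [mul_nonneg (mul_nonneg hp hq) hr]) (sq_nonneg r)
        have hr0 : r = 0 := pow_eq_zero_iff two_ne_zero |>.mp hr2
        have hpv : p = 2 := by
          have hfac : (p - 2) * (p + 2) = 0 := by linear_combination hp4
          rcases mul_eq_zero.mp hfac with h | h
          · linarith
          · linarith
        rw [hq0, hr0, hpv]
        nlinarith [sq_nonneg (x 0 - x 1), sq_nonneg (x 2)]
      · nlinarith [sq_nonneg (2 * x 0 - p * x 1 - q * x 2),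
          sq_nonneg ((4 - p ^ 2) * x 1 - (2 * r + p * q) * x 2),
          mul_nonneg (by linarith : (0:ℝ) ≤ 4 - (p ^ 2 + q ^ 2 + r ^ 2 + p * q * r))
            (sq_nonneg (x 2)), mul_pos hLt hLt]
end
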